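/- arXiv:1405.4002 — 8 statements merged into one kernel-verified Lean document; each statement's English description precedes it below -/
import Mathlib

section
/- For all bounded functions v, w : ℝ^s → ℝ, the Bellman operator satisfies ‖Γ(v) − Γ(w)‖_∞ ≤ e^{−δ} ‖v − w‖_∞, i.e. Γ is Lipschitz with constant e^{−δ} < 1 with respect to the supremum norm. -/
lemma key_sSup_le {α : Type*} (U : Set α) (hne : U.Nonempty) (g h : α → ℝ)
    (hbh : BddAbove (h '' U)) (K : ℝ) (hK : ∀ u ∈ U, g u ≤ h u + K) :
    sSup (g '' U) ≤ sSup (h '' U) + K := by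
  refine csSup_le (hne.image g) ?_
  rintro a ⟨u, hu, rfl⟩
  exact (hK u hu).trans (add_le_add_left (le_csSup hbh ⟨u, hu, rfl⟩) K)

open Classical in
/-- The Kružkov-transformed Bellman operator. -/
noncomputable def bellman {s d : ℕ}
    (Om T : Set (EuclideanSpace ℝ (Fin s))) (U : Set (EuclideanSpace ℝ (Fin d)))
    (f : EuclideanSpace ℝ (Fin s) → EuclideanSpace ℝ (Fin d) → EuclideanSpace ℝ (Fin s))
    (c : EuclideanSpace ℝ (Fin s) → EuclideanSpace ℝ (Fin d) → ℝ)
    (v : EuclideanSpace ℝ (Fin s) → ℝ) :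
    EuclideanSpace ℝ (Fin s) → ℝ :=
  fun x =>
    if x ∈ T then 1
    else if x ∈ Om then
      sSup ((fun u => Real.exp (-c x u) * (if f x u ∈ T then 1 else v (f x u))) '' U)
    else 0

/-- the Bellman operator is Lipschitz with constant `e^{-δ} < 1`
in the supremum norm on bounded functions. -/
theorem bellman_contraction_estimate {s d : ℕ}
    (Om T : Set (EuclideanSpace ℝ (Fin s))) (U : Set (EuclideanSpace ℝ (Fin d)))
    (hOm : IsCompact Om) (hU : IsCompact U) (hUne : U.Nonempty)
    (hT : IsCompact T) (hTOm : T ⊆ Om)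
    (f : EuclideanSpace ℝ (Fin s) → EuclideanSpace ℝ (Fin d) → EuclideanSpace ℝ (Fin s))
    (hf : ContinuousOn (fun p => f p.1 p.2) (Om ×ˢ U))
    (hfm : ∀ x ∈ Om, ∀ u ∈ U, f x u ∈ Om)
    (c : EuclideanSpace ℝ (Fin s) → EuclideanSpace ℝ (Fin d) → ℝ)
    (hc : ContinuousOn (fun p => c p.1 p.2) (Om ×ˢ U))
    (hc0 : ∀ x ∈ Om, ∀ u ∈ U, 0 ≤ c x u)
    (δ : ℝ) (hδ : 0 < δ)
    (hcδ : ∀ x ∈ Om \ T, ∀ u ∈ U, δ ≤ c x u)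
    (v w : EuclideanSpace ℝ (Fin s) → ℝ)
    (hv : ∃ M, ∀ x, |v x| ≤ M) (hw : ∃ M, ∀ x, |w x| ≤ M) :
    (⨆ x, |bellman Om T U f c v x - bellman Om T U f c w x|) ≤
      Real.exp (-δ) * ⨆ x, |v x - w x| := by
  classical
  obtain ⟨Mv, hMv⟩ := hv
  obtain ⟨Mw, hMw⟩ := hw
  set K := ⨆ x, |v x - w x| with hKdef
  have hKbdd : BddAbove (Set.range fun x => |v x - w x|) := by
    refine ⟨Mv + Mw, ?_⟩
    rintro _ ⟨x, rfl⟩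
    calc |v x - w x| ≤ |v x| + |w x| := abs_sub _ _
      _ ≤ Mv + Mw := add_le_add (hMv x) (hMw x)
  have hKle : ∀ y, |v y - w y| ≤ K := fun y => le_ciSup hKbdd y
  have hK0 : 0 ≤ K := le_trans (abs_nonneg _) (hKle 0)
  have hRHS0 : 0 ≤ Real.exp (-δ) * K := mul_nonneg (Real.exp_pos _).le hK0
  refine ciSup_le fun x => ?_
  by_cases hxT : x ∈ T
  · simp [bellman, hxT, hRHS0]
  by_cases hxOm : x ∈ Om
  · have hxd : x ∈ Om \ T := ⟨hxOm, hxT⟩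
    set g := fun u => Real.exp (-c x u) * (if f x u ∈ T then 1 else v (f x u)) with hg
    set h := fun u => Real.exp (-c x u) * (if f x u ∈ T then 1 else w (f x u)) with hh
    have hbdd : ∀ (z : EuclideanSpace ℝ (Fin s) → ℝ) (Mz : ℝ), (∀ y, |z y| ≤ Mz) →
        BddAbove ((fun u => Real.exp (-c x u) * (if f x u ∈ T then 1 else z (f x u))) '' U) := by
      intro z Mz hMz
      refine ⟨max 1 Mz, ?_⟩
      rintro _ ⟨u, hu, rfl⟩
      have hcn : 0 ≤ c x u := hc0 x hxOm u hu
      have he1 : Real.exp (-c x u) ≤ 1 := Real.exp_le_one_iff.mpr (by linarith)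
      have hz : (if f x u ∈ T then 1 else z (f x u)) ≤ max 1 Mz := by
        split
        · exact le_max_left _ _
        · exact le_trans (le_abs_self _) (le_trans (hMz _) (le_max_right _ _))
      calc Real.exp (-c x u) * (if f x u ∈ T then 1 else z (f x u))
          ≤ Real.exp (-c x u) * max 1 Mz :=
            mul_le_mul_of_nonneg_left hz (Real.exp_pos _).le
        _ ≤ 1 * max 1 Mz := by
            have : (0:ℝ) ≤ max 1 Mz := le_trans zero_le_one (le_max_left _ _)
            exact mul_le_mul_of_nonneg_right he1 this
        _ = max 1 Mz := one_mul _
    have hbg : BddAbove (g '' U) := hbdd v Mv hMv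
    have hbh : BddAbove (h '' U) := hbdd w Mw hMw
    have hdiff : ∀ u ∈ U, |g u - h u| ≤ Real.exp (-δ) * K := by
      intro u hu
      have hgh : g u - h u =
          Real.exp (-c x u) * (if f x u ∈ T then 0 else v (f x u) - w (f x u)) := by
        simp only [hg, hh]
        split <;> ring
      rw [hgh, abs_mul, abs_of_nonneg (Real.exp_pos (-c x u)).le]
      have h1 : Real.exp (-c x u) ≤ Real.exp (-δ) :=
        Real.exp_le_exp.mpr (by linarith [hcδ x hxd u hu])
      have h2 : |if f x u ∈ T then 0 else v (f x u) - w (f x u)| ≤ K := by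
        split
        · simpa using hK0
        · exact hKle _
      exact mul_le_mul h1 h2 (abs_nonneg _) (Real.exp_pos _).le
    have hb1 : sSup (g '' U) ≤ sSup (h '' U) + Real.exp (-δ) * K :=
      key_sSup_le U hUne g h hbh _ fun u hu => by
        have := hdiff u hu; rw [abs_sub_le_iff] at this; linarith [this.1]
    have hb2 : sSup (h '' U) ≤ sSup (g '' U) + Real.exp (-δ) * K :=
      key_sSup_le U hUne h g hbg _ fun u hu => by
        have := hdiff u hu; rw [abs_sub_le_iff] at this; linarith [this.2]
    have : |bellman Om T U f c v x - bellman Om T U f c w x| =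
        |sSup (g '' U) - sSup (h '' U)| := by
      simp [bellman, hxT, hxOm, hg, hh]
    rw [this, abs_sub_le_iff]
    constructor <;> linarith
  · simp [bellman, hxT, hxOm, hRHS0]
end

section
/- The Bellman operator Γ possesses a unique fixed point in the space of bounded functions ℝ^s → ℝ, i.e. there exists a unique bounded function v : ℝ^s → ℝ with Γ(v) = v. -/
section aux

/-- Abstract bound for a sup of an image. -/
lemma abs_sSup_image_le {α : Type*} {U : Set α} (hne : U.Nonempty) {g : α → ℝ} {M : ℝ}
    (hM : 0 ≤ M) (hg : ∀ u ∈ U, |g u| ≤ M) : |sSup (g '' U)| ≤ M := by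
  have hb : ∀ a ∈ g '' U, a ≤ M := by
    rintro a ⟨u, hu, rfl⟩; exact le_of_abs_le (hg u hu)
  obtain ⟨u0, hu0⟩ := hne
  rw [abs_le]
  refine ⟨?_, Real.sSup_le hb hM⟩
  exact (neg_le_of_abs_le (hg u0 hu0)).trans (le_csSup ⟨M, hb⟩ ⟨u0, hu0, rfl⟩)

/-- Abstract contraction estimate for sups of images. -/
lemma abs_sSup_sub_sSup_le {α : Type*} {U : Set α} (hne : U.Nonempty) {g h : α → ℝ}
    {M ε : ℝ} (hg : ∀ u ∈ U, g u ≤ M) (hh : ∀ u ∈ U, h u ≤ M) (hε : 0 ≤ ε)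
    (hgh : ∀ u ∈ U, |g u - h u| ≤ ε) :
    |sSup (g '' U) - sSup (h '' U)| ≤ ε := by
  have hbg : ∀ a ∈ g '' U, a ≤ M := by rintro a ⟨u, hu, rfl⟩; exact hg u hu
  have hbh : ∀ a ∈ h '' U, a ≤ M := by rintro a ⟨u, hu, rfl⟩; exact hh u hu
  rw [abs_sub_le_iff]
  constructor
  · rw [sub_le_iff_le_add]
    refine csSup_le (hne.image _) ?_
    rintro a ⟨u, hu, rfl⟩
    have h1 := le_of_abs_le (hgh u hu)
    have h2 := le_csSup ⟨M, hbh⟩ (Set.mem_image_of_mem h hu)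
    linarith
  · rw [sub_le_iff_le_add]
    refine csSup_le (hne.image _) ?_
    rintro a ⟨u, hu, rfl⟩
    have h1 := neg_le_of_abs_le (hgh u hu)
    have h2 := le_csSup ⟨M, hbg⟩ (Set.mem_image_of_mem g hu)
    linarith

variable {s d : ℕ}
  {Om T : Set (EuclideanSpace ℝ (Fin s))} {U : Set (EuclideanSpace ℝ (Fin d))}
  {f : EuclideanSpace ℝ (Fin s) → EuclideanSpace ℝ (Fin d) → EuclideanSpace ℝ (Fin s)}
  {c : EuclideanSpace ℝ (Fin s) → EuclideanSpace ℝ (Fin d) → ℝ}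

open Classical in
/-- Bound on individual elements of the supremized set. -/
lemma bellman_elt_bound (hc0 : ∀ x ∈ Om, ∀ u ∈ U, 0 ≤ c x u)
    {v : EuclideanSpace ℝ (Fin s) → ℝ} {M : ℝ} (hM : ∀ x, |v x| ≤ M) (hM1 : (1:ℝ) ≤ M)
    {x : EuclideanSpace ℝ (Fin s)} (hx : x ∈ Om) {u : EuclideanSpace ℝ (Fin d)} (hu : u ∈ U) :
    |Real.exp (-c x u) * (if f x u ∈ T then 1 else v (f x u))| ≤ M := by
  rw [abs_mul]
  have h1 : |Real.exp (-c x u)| ≤ 1 := by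
    rw [abs_of_pos (Real.exp_pos _)]
    exact Real.exp_le_one_iff.mpr (by simpa using hc0 x hx u hu)
  have h2 : |(if f x u ∈ T then (1:ℝ) else v (f x u))| ≤ M := by
    split
    · simpa using hM1
    · exact hM _
  calc |Real.exp (-c x u)| * |(if f x u ∈ T then (1:ℝ) else v (f x u))|
      ≤ 1 * M := mul_le_mul h1 h2 (abs_nonneg _) zero_le_one
    _ = M := one_mul M

/-- The Bellman operator maps bounded functions to bounded functions. -/
lemma bellman_bound (hUne : U.Nonempty) (hc0 : ∀ x ∈ Om, ∀ u ∈ U, 0 ≤ c x u)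
    {v : EuclideanSpace ℝ (Fin s) → ℝ} {M : ℝ} (hM : ∀ x, |v x| ≤ M) (hM1 : (1:ℝ) ≤ M)
    (x : EuclideanSpace ℝ (Fin s)) :
    |bellman Om T U f c v x| ≤ M := by
  unfold bellman
  split
  · simpa using hM1
  split
  · rename_i hxT hxOm
    exact abs_sSup_image_le hUne (zero_le_one.trans hM1)
      (fun u hu => bellman_elt_bound hc0 hM hM1 hxOm hu)
  · simpa using (zero_le_one.trans hM1)

/-- Pointwise contraction estimate for the Bellman operator. -/
lemma bellman_contract {δ : ℝ} (hUne : U.Nonempty) (hc0 : ∀ x ∈ Om, ∀ u ∈ U, 0 ≤ c x u)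
    (hcδ : ∀ x ∈ Om \ T, ∀ u ∈ U, δ ≤ c x u)
    {v w : EuclideanSpace ℝ (Fin s) → ℝ} {M D : ℝ}
    (hMv : ∀ x, |v x| ≤ M) (hMw : ∀ x, |w x| ≤ M) (hM1 : (1:ℝ) ≤ M)
    (hD : 0 ≤ D) (hvw : ∀ y, |v y - w y| ≤ D)
    (x : EuclideanSpace ℝ (Fin s)) :
    |bellman Om T U f c v x - bellman Om T U f c w x| ≤ Real.exp (-δ) * D := by
  classical
  have hεnn : 0 ≤ Real.exp (-δ) * D := mul_nonneg (Real.exp_pos _).le hD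
  unfold bellman
  split
  · simpa using hεnn
  split
  swap
  · simpa using hεnn
  rename_i hxT hxOm
  refine abs_sSup_sub_sSup_le hUne
    (fun u hu => le_of_abs_le (bellman_elt_bound hc0 hMv hM1 hxOm hu))
    (fun u hu => le_of_abs_le (bellman_elt_bound hc0 hMw hM1 hxOm hu))
    hεnn ?_
  intro u hu
  by_cases hfT : f x u ∈ T
  · simpa [hfT] using hεnn
  · simp only [hfT, if_false]
    rw [← mul_sub, abs_mul, abs_of_pos (Real.exp_pos _)]
    have h1 : Real.exp (-c x u) ≤ Real.exp (-δ) :=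
      Real.exp_le_exp.mpr (neg_le_neg (hcδ x ⟨hxOm, hxT⟩ u hu))
    exact mul_le_mul h1 (hvw _) (abs_nonneg _) (Real.exp_pos _).le

end aux

set_option synthInstance.maxHeartbeats 1000000 in
set_option maxHeartbeats 1000000 in
/-- the Bellman operator possesses a unique fixed point among the
bounded functions `ℝ^s → ℝ`. -/
theorem bellman_unique_fixed_point {s d : ℕ}
    (Om T : Set (EuclideanSpace ℝ (Fin s))) (U : Set (EuclideanSpace ℝ (Fin d)))
    (hOm : IsCompact Om) (hU : IsCompact U) (hUne : U.Nonempty)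
    (hT : IsCompact T) (hTOm : T ⊆ Om)
    (f : EuclideanSpace ℝ (Fin s) → EuclideanSpace ℝ (Fin d) → EuclideanSpace ℝ (Fin s))
    (hf : ContinuousOn (fun p => f p.1 p.2) (Om ×ˢ U))
    (hfm : ∀ x ∈ Om, ∀ u ∈ U, f x u ∈ Om)
    (c : EuclideanSpace ℝ (Fin s) → EuclideanSpace ℝ (Fin d) → ℝ)
    (hc : ContinuousOn (fun p => c p.1 p.2) (Om ×ˢ U))
    (hc0 : ∀ x ∈ Om, ∀ u ∈ U, 0 ≤ c x u)
    (δ : ℝ) (hδ : 0 < δ)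
    (hcδ : ∀ x ∈ Om \ T, ∀ u ∈ U, δ ≤ c x u) :
    ∃! v : EuclideanSpace ℝ (Fin s) → ℝ,
      (∃ M, ∀ x, |v x| ≤ M) ∧ bellman Om T U f c v = v := by
  classical
  let V := lp (fun _ : EuclideanSpace ℝ (Fin s) => ℝ) ⊤
  have hmem : ∀ v : V, Memℓp (bellman Om T U f c ⇑v) ⊤ := by
    intro v
    refine memℓp_infty ⟨max 1 ‖v‖, ?_⟩
    rintro a ⟨x, rfl⟩
    have hb : ∀ y, |v y| ≤ max 1 ‖v‖ := fun y =>
      (lp.norm_apply_le_norm ENNReal.top_ne_zero v y).trans (le_max_right _ _)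
    simpa using bellman_bound hUne hc0 hb (le_max_left _ _) x
  let Γ : V → V := fun v => ⟨bellman Om T U f c ⇑v, hmem v⟩
  have hΓcoe : ∀ v : V, ⇑(Γ v) = bellman Om T U f c ⇑v := fun _ => rfl
  have hKnn : (0:ℝ) ≤ Real.exp (-δ) := (Real.exp_pos _).le
  set K : NNReal := ⟨Real.exp (-δ), hKnn⟩ with hKdef
  have hK1 : K < 1 := by
    rw [← NNReal.coe_lt_coe]
    exact Real.exp_lt_one_iff.mpr (by linarith)
  have hlip : LipschitzWith K Γ := by
    refine LipschitzWith.of_dist_le_mul fun v w => ?_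
    rw [dist_eq_norm, dist_eq_norm]
    refine lp.norm_le_of_forall_le (mul_nonneg hKnn (norm_nonneg _)) fun x => ?_
    have hsub : ⇑(Γ v - Γ w) = ⇑(Γ v) - ⇑(Γ w) := lp.coeFn_sub _ _
    have hsub' : ⇑(v - w) = ⇑v - ⇑w := lp.coeFn_sub _ _
    have hvw : ∀ y, |v y - w y| ≤ ‖v - w‖ := fun y => by
      have := lp.norm_apply_le_norm ENNReal.top_ne_zero (v - w) y
      rwa [hsub', Pi.sub_apply, Real.norm_eq_abs] at this
    have hMv : ∀ y, |v y| ≤ max 1 (max ‖v‖ ‖w‖) := fun y =>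
      (lp.norm_apply_le_norm ENNReal.top_ne_zero v y).trans
        ((le_max_left _ _).trans (le_max_right _ _))
    have hMw : ∀ y, |w y| ≤ max 1 (max ‖v‖ ‖w‖) := fun y =>
      (lp.norm_apply_le_norm ENNReal.top_ne_zero w y).trans
        ((le_max_right _ _).trans (le_max_right _ _))
    rw [hsub, Pi.sub_apply, hΓcoe, hΓcoe, Real.norm_eq_abs]
    exact bellman_contract hUne hc0 hcδ hMv hMw (le_max_left _ _)
      (norm_nonneg _) hvw x
  have hcontr : ContractingWith K Γ := ⟨hK1, hlip⟩
  have : Nonempty V := ⟨0⟩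
  have hfix : Γ (ContractingWith.fixedPoint Γ hcontr) = ContractingWith.fixedPoint Γ hcontr :=
    hcontr.fixedPoint_isFixedPt
  set v₀ : V := ContractingWith.fixedPoint Γ hcontr
  refine ⟨⇑v₀, ⟨⟨‖v₀‖, fun x => by
    simpa using lp.norm_apply_le_norm ENNReal.top_ne_zero v₀ x⟩, ?_⟩, ?_⟩
  · rw [← hΓcoe v₀, hfix]
  · rintro w ⟨⟨M, hMw⟩, hwfix⟩
    have hwmem : Memℓp w (⊤ : ENNReal) :=
      memℓp_infty ⟨M, by rintro a ⟨x, rfl⟩; simpa using hMw x⟩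
    let w' : V := ⟨w, hwmem⟩
    have hw'fix : Function.IsFixedPt Γ w' := by
      apply Subtype.ext
      exact hwfix
    have : w' = v₀ := hcontr.fixedPoint_unique hw'fix
    exact congrArg Subtype.val this
end

section
/- If v : Ω → ℝ is Lipschitz continuous with Lipschitz constant L_v, and the Shepard weight function is w(ξ, x) = φ^σ(‖ξ − x‖₂) for a nonnegative shape function φ^σ : [0,∞) → [0,∞) with φ^σ(r) = 0 for all r ≥ ρ/σ (σ, ρ > 0), then ‖v − Sv‖_∞ = sup_{x∈Ω} |v(x) − Sv(x)| ≤ L_v · ρ/σ. In particular, for σ = C_σ/h with constants C_σ, h > 0 one obtains ‖v − Sv‖_∞ ≤ L_v (ρ/C_σ) h. -/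
/-- The Shepard approximation operator. -/
noncomputable def shepard {s : ℕ} (n : ℕ) (nodes : Fin n → EuclideanSpace ℝ (Fin s))
    (w : EuclideanSpace ℝ (Fin s) → EuclideanSpace ℝ (Fin s) → ℝ)
    (v : EuclideanSpace ℝ (Fin s) → ℝ) :
    EuclideanSpace ℝ (Fin s) → ℝ :=
  fun x => ∑ i, v (nodes i) * (w (nodes i) x / ∑ j, w (nodes j) x)

/-- if `v` is Lipschitz with constant `L_v` and the Shepard weight is
`w(ξ,x) = φ^σ(‖ξ - x‖₂)` with a nonnegative shape function vanishing on `[ρ/σ, ∞)`,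
then `‖v - Sv‖_∞ ≤ L_v ρ/σ`; in particular for `σ = C_σ/h` one gets
`‖v - Sv‖_∞ ≤ L_v (ρ/C_σ) h`. -/
theorem shepard_lipschitz_error {s : ℕ} (Om : Set (EuclideanSpace ℝ (Fin s)))
    (n : ℕ) (hn : 0 < n)
    (nodes : Fin n → EuclideanSpace ℝ (Fin s)) (hnodes : ∀ i, nodes i ∈ Om)
    (φ : ℝ → ℝ) (σ ρ : ℝ) (hσ : 0 < σ) (hρ : 0 < ρ)
    (hφ0 : ∀ r, 0 ≤ φ r) (hφsupp : ∀ r, ρ / σ ≤ r → φ r = 0)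
    (hpos : ∀ x ∈ Om, 0 < ∑ j, φ ‖nodes j - x‖)
    (v : EuclideanSpace ℝ (Fin s) → ℝ) (Lv : ℝ) (hLv : 0 ≤ Lv)
    (hlip : ∀ x ∈ Om, ∀ y ∈ Om, |v x - v y| ≤ Lv * ‖x - y‖) :
    (⨆ x : Om, |v x - shepard n nodes (fun ξ y => φ ‖ξ - y‖) v x|) ≤ Lv * (ρ / σ) ∧
    ∀ Cσ h : ℝ, 0 < Cσ → 0 < h → σ = Cσ / h →
      (⨆ x : Om, |v x - shepard n nodes (fun ξ y => φ ‖ξ - y‖) v x|) ≤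
        Lv * (ρ / Cσ) * h := by
  have hbound : ∀ x : Om, |v x - shepard n nodes (fun ξ y => φ ‖ξ - y‖) v x| ≤ Lv * (ρ / σ) := by
    rintro ⟨x, hx⟩
    have hW : 0 < ∑ j, φ ‖nodes j - x‖ := hpos x hx
    set W := ∑ j, φ ‖nodes j - x‖ with hWdef
    have hone : ∑ i, φ ‖nodes i - x‖ / W = 1 := by
      rw [← Finset.sum_div, ← hWdef, div_self hW.ne']
    have hvx : v x = ∑ i, v x * (φ ‖nodes i - x‖ / W) := by
      rw [← Finset.mul_sum, hone, mul_one]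
    have hdiff : v x - shepard n nodes (fun ξ y => φ ‖ξ - y‖) v x
        = ∑ i, (v x - v (nodes i)) * (φ ‖nodes i - x‖ / W) := by
      simp only [shepard, ← hWdef]
      conv_lhs => rw [hvx]
      rw [← Finset.sum_sub_distrib]
      exact Finset.sum_congr rfl fun i _ => by ring
    calc |v x - shepard n nodes (fun ξ y => φ ‖ξ - y‖) v x|
        = |∑ i, (v x - v (nodes i)) * (φ ‖nodes i - x‖ / W)| := by rw [hdiff]
      _ ≤ ∑ i, |(v x - v (nodes i)) * (φ ‖nodes i - x‖ / W)| := Finset.abs_sum_le_sum_abs _ _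
      _ ≤ ∑ i, (Lv * (ρ / σ)) * (φ ‖nodes i - x‖ / W) := by
          apply Finset.sum_le_sum
          intro i _
          rw [abs_mul]
          have hq : 0 ≤ φ ‖nodes i - x‖ / W := div_nonneg (hφ0 _) hW.le
          rw [abs_of_nonneg hq]
          by_cases hc : ρ / σ ≤ ‖nodes i - x‖
          · rw [hφsupp _ hc]; simp
          · push_neg at hc
            apply mul_le_mul_of_nonneg_right _ hq
            calc |v x - v (nodes i)| ≤ Lv * ‖x - nodes i‖ := hlip x hx _ (hnodes i)
              _ = Lv * ‖nodes i - x‖ := by rw [norm_sub_rev]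
              _ ≤ Lv * (ρ / σ) := mul_le_mul_of_nonneg_left hc.le hLv
      _ = (Lv * (ρ / σ)) * ∑ i, φ ‖nodes i - x‖ / W := by rw [Finset.mul_sum]
      _ = Lv * (ρ / σ) := by rw [hone, mul_one]
  have hnn : 0 ≤ Lv * (ρ / σ) := mul_nonneg hLv (div_nonneg hρ.le hσ.le)
  have hmain : (⨆ x : Om, |v x - shepard n nodes (fun ξ y => φ ‖ξ - y‖) v x|) ≤ Lv * (ρ / σ) :=
    Real.iSup_le hbound hnn
  refine ⟨hmain, ?_⟩
  intro Cσ h hC hh hσeq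
  have : Lv * (ρ / σ) = Lv * (ρ / Cσ) * h := by
    rw [hσeq]; field_simp
  linarith [hmain]
end

section
/- Suppose the fixed point v of the Bellman operator Γ, restricted to Ω, is Lipschitz continuous with Lipschitz constant L_v. Let (X_k) be a sequence of finite node sets in Ω with fill distances h_k > 0, let C_σ, ρ > 0 be constants, and for each k let S_k be the Shepard operator built from the weight function w_k(ξ,x) = φ^{σ_k}(‖ξ − x‖₂) with shape parameter σ_k = C_σ/h_k, where the nonnegative shape function φ^{σ_k} vanishes for arguments r ≥ ρ/σ_k and satisfies Σ_{x_j ∈ X_k} w_k(x_j,x) > 0 for all x ∈ Ω. If ṽ_k denotes the unique fixed point of the Bellman–Shepard operator Γ̃_k = S_k ∘ Γ, then ‖v − ṽ_k‖_∞ ≤ (L_v ρ / (C_σ (1 − e^{−δ}))) · h_k on Ω; in particular ṽ_k → v uniformly as h_k → 0. -/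
/-- convergence of the fixed points `ṽ_k` of the Bellman–Shepard
operators `Γ̃_k = S_k ∘ Γ` to the fixed point `v` of the Bellman operator for
decreasing fill distance: `‖v - ṽ_k‖_∞ ≤ L_v ρ / (C_σ (1 - e^{-δ})) · h_k` on `Ω`,
and in particular `ṽ_k → v` uniformly on `Ω` as `h_k → 0`. -/
theorem bellman_shepard_convergence {s d : ℕ}
    (Om T : Set (EuclideanSpace ℝ (Fin s))) (U : Set (EuclideanSpace ℝ (Fin d)))
    (hOm : IsCompact Om) (hOmne : Om.Nonempty) (hU : IsCompact U) (hUne : U.Nonempty)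
    (hT : IsCompact T) (hTOm : T ⊆ Om)
    (f : EuclideanSpace ℝ (Fin s) → EuclideanSpace ℝ (Fin d) → EuclideanSpace ℝ (Fin s))
    (hf : ContinuousOn (fun p => f p.1 p.2) (Om ×ˢ U))
    (hfm : ∀ x ∈ Om, ∀ u ∈ U, f x u ∈ Om)
    (c : EuclideanSpace ℝ (Fin s) → EuclideanSpace ℝ (Fin d) → ℝ)
    (hc : ContinuousOn (fun p => c p.1 p.2) (Om ×ˢ U))
    (hc0 : ∀ x ∈ Om, ∀ u ∈ U, 0 ≤ c x u)
    (δ : ℝ) (hδ : 0 < δ)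
    (hcδ : ∀ x ∈ Om \ T, ∀ u ∈ U, δ ≤ c x u)
    -- the fixed point v of Γ, bounded and Lipschitz on Ω with constant L_v
    (v : EuclideanSpace ℝ (Fin s) → ℝ) (hvbd : ∃ M, ∀ x, |v x| ≤ M)
    (hvfix : bellman Om T U f c v = v)
    (Lv : ℝ) (hLv : 0 ≤ Lv)
    (hvlip : ∀ x ∈ Om, ∀ y ∈ Om, |v x - v y| ≤ Lv * ‖x - y‖)
    -- the sequence of node sets X_k with fill distances h_k and shape parameters
    -- σ_k = C_σ / h_k
    (Cσ ρ : ℝ) (hCσ : 0 < Cσ) (hρ : 0 < ρ)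
    (n : ℕ → ℕ) (hn : ∀ k, 0 < n k)
    (nodes : ∀ k, Fin (n k) → EuclideanSpace ℝ (Fin s))
    (hnodes : ∀ k i, nodes k i ∈ Om)
    (h : ℕ → ℝ) (hh : ∀ k, 0 < h k)
    (hfill : ∀ k, h k = ⨆ x : Om, ⨅ i, dist (x : EuclideanSpace ℝ (Fin s)) (nodes k i))
    -- the shape functions φ_k = φ^{σ_k}, nonnegative and vanishing for r ≥ ρ/σ_k
    (φ : ℕ → ℝ → ℝ) (hφ0 : ∀ k r, 0 ≤ φ k r)
    (hφsupp : ∀ k r, ρ / (Cσ / h k) ≤ r → φ k r = 0)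
    (hφpos : ∀ k, ∀ x ∈ Om, 0 < ∑ j, φ k ‖nodes k j - x‖)
    -- the fixed points ṽ_k of the Bellman-Shepard operators Γ̃_k = S_k ∘ Γ
    (vt : ℕ → EuclideanSpace ℝ (Fin s) → ℝ)
    (hvtfix : ∀ k,
      shepard (n k) (nodes k) (fun ξ y => φ k ‖ξ - y‖) (bellman Om T U f c (vt k)) = vt k) :
    (∀ k, ∀ x ∈ Om, |v x - vt k x| ≤ Lv * ρ / (Cσ * (1 - Real.exp (-δ))) * h k) ∧
    (Filter.Tendsto h Filter.atTop (nhds 0) →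
      TendstoUniformlyOn (fun k x => vt k x) v Filter.atTop Om) := by
  classical
  obtain ⟨Mv, hMv⟩ := hvbd
  have hexp1 : Real.exp (-δ) < 1 := by
    calc Real.exp (-δ) < Real.exp 0 := Real.exp_lt_exp.mpr (by linarith)
    _ = 1 := Real.exp_zero
  have hden : 0 < 1 - Real.exp (-δ) := by linarith
  set K : ℝ := Lv * ρ / (Cσ * (1 - Real.exp (-δ))) with hK
  have hKnn : 0 ≤ K := by
    apply div_nonneg (mul_nonneg hLv hρ.le)
    positivity
  have key : ∀ k, ∀ x ∈ Om, |v x - vt k x| ≤ K * h k := by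
    intro k
    -- notation
    set Γ := bellman Om T U f c with hΓ
    set g : Fin (n k) → ℝ := fun i => Γ (vt k) (nodes k i) with hg
    set B : ℝ := ∑ i, |g i| with hB
    have hvt_eq : ∀ x, vt k x =
        ∑ i, g i * (φ k ‖nodes k i - x‖ / ∑ j, φ k ‖nodes k j - x‖) := by
      intro x
      rw [← congrFun (hvtfix k) x]
      rfl
    -- boundedness of vt k
    have hvtbd : ∀ x, |vt k x| ≤ B := by
      intro x
      rw [hvt_eq x]
      calc |∑ i, g i * (φ k ‖nodes k i - x‖ / ∑ j, φ k ‖nodes k j - x‖)|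
          ≤ ∑ i, |g i * (φ k ‖nodes k i - x‖ / ∑ j, φ k ‖nodes k j - x‖)| :=
            Finset.abs_sum_le_sum_abs _ _
        _ ≤ ∑ i, |g i| := by
            apply Finset.sum_le_sum
            intro i _
            rw [abs_mul]
            have hθ : |φ k ‖nodes k i - x‖ / ∑ j, φ k ‖nodes k j - x‖| ≤ 1 := by
              rcases eq_or_lt_of_le
                (Finset.sum_nonneg (fun j _ => hφ0 k ‖nodes k j - x‖)) with hD | hD
              · have hzero : ∀ j ∈ Finset.univ, φ k ‖nodes k j - x‖ = 0 := by
                  intro j _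
                  exact le_antisymm (by
                    have := (Finset.sum_eq_zero_iff_of_nonneg
                      (fun j _ => hφ0 k ‖nodes k j - x‖)).mp hD.symm
                    exact le_of_eq (this j (Finset.mem_univ j))) (hφ0 k _)
                rw [hzero i (Finset.mem_univ i)]
                simp
              · rw [abs_of_nonneg (div_nonneg (hφ0 k _) (le_of_lt hD))]
                rw [div_le_one hD]
                exact Finset.single_le_sum (fun j _ => hφ0 k ‖nodes k j - x‖)
                  (Finset.mem_univ i)
            calc |g i| * |φ k ‖nodes k i - x‖ / ∑ j, φ k ‖nodes k j - x‖|
                ≤ |g i| * 1 := by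
                  exact mul_le_mul_of_nonneg_left hθ (abs_nonneg _)
              _ = |g i| := mul_one _
    -- the sup norm M of v - vt k on Om
    set M : ℝ := sSup ((fun x => |v x - vt k x|) '' Om) with hMdef
    have hbdd : BddAbove ((fun x => |v x - vt k x|) '' Om) := by
      refine ⟨Mv + B, ?_⟩
      rintro a ⟨x, _, rfl⟩
      calc |v x - vt k x| ≤ |v x| + |vt k x| := abs_sub _ _
        _ ≤ Mv + B := add_le_add (hMv x) (hvtbd x)
    have hMle : ∀ x ∈ Om, |v x - vt k x| ≤ M := by
      intro x hx
      exact le_csSup hbdd ⟨x, hx, rfl⟩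
    have hM0 : 0 ≤ M := by
      obtain ⟨x0, hx0⟩ := hOmne
      exact le_trans (abs_nonneg _) (hMle x0 hx0)
    -- contraction estimate for Γ
    have hcontr : ∀ y ∈ Om, |Γ v y - Γ (vt k) y| ≤ Real.exp (-δ) * M := by
      intro y hy
      by_cases hyT : y ∈ T
      · simp only [hΓ, bellman, if_pos hyT, sub_self, abs_zero]
        exact mul_nonneg (Real.exp_pos _).le hM0
      · simp only [hΓ, bellman, if_neg hyT, if_pos hy]
        set gv : EuclideanSpace ℝ (Fin d) → ℝ :=
          fun u => Real.exp (-c y u) * (if f y u ∈ T then 1 else v (f y u)) with hgv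
        set gw : EuclideanSpace ℝ (Fin d) → ℝ :=
          fun u => Real.exp (-c y u) * (if f y u ∈ T then 1 else vt k (f y u)) with hgw
        have hexple : ∀ u ∈ U, Real.exp (-c y u) ≤ 1 := by
          intro u hu
          calc Real.exp (-c y u) ≤ Real.exp 0 :=
              Real.exp_le_exp.mpr (by have := hc0 y hy u hu; linarith)
            _ = 1 := Real.exp_zero
        have hAne : (gv '' U).Nonempty := hUne.image _
        have hBne : (gw '' U).Nonempty := hUne.image _
        have hAbdd : BddAbove (gv '' U) := by
          refine ⟨max 1 Mv, ?_⟩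
          rintro a ⟨u, hu, rfl⟩
          calc gv u ≤ |gv u| := le_abs_self _
            _ = Real.exp (-c y u) * |(if f y u ∈ T then 1 else v (f y u))| := by
                rw [hgv]; rw [abs_mul, abs_of_pos (Real.exp_pos _)]
            _ ≤ 1 * max 1 Mv := by
                apply mul_le_mul (hexple u hu) ?_ (abs_nonneg _) zero_le_one
                by_cases hfT : f y u ∈ T
                · simp [hfT]
                · simp only [if_neg hfT]
                  exact le_trans (hMv _) (le_max_right _ _)
            _ = max 1 Mv := one_mul _
        have hBbdd : BddAbove (gw '' U) := by
          refine ⟨max 1 B, ?_⟩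
          rintro a ⟨u, hu, rfl⟩
          calc gw u ≤ |gw u| := le_abs_self _
            _ = Real.exp (-c y u) * |(if f y u ∈ T then 1 else vt k (f y u))| := by
                rw [hgw]; rw [abs_mul, abs_of_pos (Real.exp_pos _)]
            _ ≤ 1 * max 1 B := by
                apply mul_le_mul (hexple u hu) ?_ (abs_nonneg _) zero_le_one
                by_cases hfT : f y u ∈ T
                · simp [hfT]
                · simp only [if_neg hfT]
                  exact le_trans (hvtbd _) (le_max_right _ _)
            _ = max 1 B := one_mul _
        have hpt : ∀ u ∈ U, |gv u - gw u| ≤ Real.exp (-δ) * M := by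
          intro u hu
          by_cases hfT : f y u ∈ T
          · simp only [hgv, hgw, if_pos hfT, sub_self, abs_zero]
            exact mul_nonneg (Real.exp_pos _).le hM0
          · simp only [hgv, hgw, if_neg hfT]
            rw [← mul_sub, abs_mul, abs_of_pos (Real.exp_pos _)]
            have hcle : Real.exp (-c y u) ≤ Real.exp (-δ) := by
              apply Real.exp_le_exp.mpr
              have := hcδ y ⟨hy, hyT⟩ u hu
              linarith
            exact mul_le_mul hcle (hMle _ (hfm y hy u hu)) (abs_nonneg _)
              (Real.exp_pos _).le
        rw [abs_sub_le_iff]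
        constructor
        · rw [sub_le_iff_le_add]
          apply csSup_le hAne
          rintro a ⟨u, hu, rfl⟩
          have h1 := (abs_sub_le_iff.mp (hpt u hu)).1
          have h2 := le_csSup hBbdd (Set.mem_image_of_mem gw hu)
          linarith
        · rw [sub_le_iff_le_add]
          apply csSup_le hBne
          rintro a ⟨u, hu, rfl⟩
          have h1 := (abs_sub_le_iff.mp (hpt u hu)).2
          have h2 := le_csSup hAbdd (Set.mem_image_of_mem gv hu)
          linarith
    -- the main pointwise estimate
    set c1 : ℝ := Lv * (ρ * h k / Cσ) with hc1
    have hc1nn : 0 ≤ c1 :=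
      mul_nonneg hLv (div_nonneg (mul_nonneg hρ.le (hh k).le) hCσ.le)
    have hr : ρ / (Cσ / h k) = ρ * h k / Cσ := div_div_eq_mul_div ρ Cσ (h k)
    have main : ∀ x ∈ Om, |v x - vt k x| ≤ c1 + Real.exp (-δ) * M := by
      intro x hx
      set W : Fin (n k) → ℝ := fun i => φ k ‖nodes k i - x‖ with hW
      set D : ℝ := ∑ j, W j with hD
      have hDpos : 0 < D := hφpos k x hx
      set θ : Fin (n k) → ℝ := fun i => W i / D with hθ
      have hθnn : ∀ i, 0 ≤ θ i := fun i => div_nonneg (hφ0 k _) hDpos.le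
      have hθsum : ∑ i, θ i = 1 := by
        rw [hθ]
        rw [← Finset.sum_div]
        exact div_self hDpos.ne'
      have hsplit : v x - vt k x = ∑ i, (v x - g i) * θ i := by
        have h2 : vt k x = ∑ i, g i * θ i := hvt_eq x
        calc v x - vt k x = v x * (∑ i, θ i) - ∑ i, g i * θ i := by
              rw [hθsum, mul_one, h2]
          _ = ∑ i, (v x - g i) * θ i := by
              rw [Finset.mul_sum, ← Finset.sum_sub_distrib]
              congr 1
              funext i
              ring
      have hper : ∀ i, |v x - g i| * θ i ≤ (c1 + Real.exp (-δ) * M) * θ i := by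
        intro i
        rcases eq_or_lt_of_le (hφ0 k ‖nodes k i - x‖) with hWi | hWi
        · have : θ i = 0 := by rw [hθ]; simp [hW, ← hWi]
          rw [this, mul_zero, mul_zero]
        · apply mul_le_mul_of_nonneg_right ?_ (hθnn i)
          have hnear : ‖nodes k i - x‖ < ρ * h k / Cσ := by
            by_contra hcon
            push_neg at hcon
            have := hφsupp k ‖nodes k i - x‖ (by rw [hr]; exact hcon)
            rw [this] at hWi
            exact lt_irrefl 0 hWi
          have hlip : |v x - v (nodes k i)| ≤ c1 := by
            calc |v x - v (nodes k i)| ≤ Lv * ‖x - nodes k i‖ :=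
                hvlip x hx (nodes k i) (hnodes k i)
              _ ≤ c1 := by
                rw [hc1]
                apply mul_le_mul_of_nonneg_left ?_ hLv
                rw [norm_sub_rev]
                exact hnear.le
          have hgi : |v (nodes k i) - g i| ≤ Real.exp (-δ) * M := by
            have hvn : v (nodes k i) = Γ v (nodes k i) :=
              (congrFun hvfix (nodes k i)).symm
            rw [hvn]
            exact hcontr (nodes k i) (hnodes k i)
          calc |v x - g i| ≤ |v x - v (nodes k i)| + |v (nodes k i) - g i| :=
              abs_sub_le _ _ _
            _ ≤ c1 + Real.exp (-δ) * M := add_le_add hlip hgi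
      calc |v x - vt k x| = |∑ i, (v x - g i) * θ i| := by rw [hsplit]
        _ ≤ ∑ i, |(v x - g i) * θ i| := Finset.abs_sum_le_sum_abs _ _
        _ = ∑ i, |v x - g i| * θ i := by
            congr 1
            funext i
            rw [abs_mul, abs_of_nonneg (hθnn i)]
        _ ≤ ∑ i, (c1 + Real.exp (-δ) * M) * θ i :=
            Finset.sum_le_sum (fun i _ => hper i)
        _ = c1 + Real.exp (-δ) * M := by
            rw [← Finset.mul_sum, hθsum, mul_one]
    -- conclude M ≤ K * h k
    have hMsup : M ≤ c1 + Real.exp (-δ) * M := by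
      apply csSup_le (hOmne.image _)
      rintro a ⟨x, hx, rfl⟩
      exact main x hx
    have hMfin : M ≤ K * h k := by
      have h1 : M * (1 - Real.exp (-δ)) ≤ c1 := by ring_nf; ring_nf at hMsup; linarith
      have h2 : M ≤ c1 / (1 - Real.exp (-δ)) := (le_div_iff₀ hden).mpr h1
      have h3 : c1 / (1 - Real.exp (-δ)) = K * h k := by
        rw [hc1, hK]
        field_simp
      linarith [h3 ▸ h2]
    intro x hx
    exact le_trans (hMle x hx) hMfin
  refine ⟨key, ?_⟩
  intro hh0
  rw [Metric.tendstoUniformlyOn_iff]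
  intro ε hε
  have htend : Filter.Tendsto (fun k => K * h k) Filter.atTop (nhds 0) := by
    simpa using hh0.const_mul K
  filter_upwards [htend.eventually (gt_mem_nhds hε)] with k hk x hx
  calc dist (v x) (vt k x) = |v x - vt k x| := Real.dist_eq _ _
    _ ≤ K * h k := key k x hx
    _ < ε := hk
end

section
/- Suppose D_C = {x ∈ S : Ṽ(x) < C} ⊆ R_η for some C > 0 and η ∈ (0,1), and f(x, ũ(x)) ∈ S for all x ∈ D_C. Then for any x₀ ∈ D_C, the trajectory of the closed-loop system x_{j+1} = f(x_j, ũ(x_j)), j = 0, 1, 2, …, remains in D_C for all j, provided c(x, ũ(x)) > 0 for all x ∈ D_C. -/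
/-- if the sublevel set `D_C = {x ∈ S : Ṽ(x) < C}` is contained in
`R_η` and the closed loop map sends `D_C` into `S`, then closed-loop trajectories
starting in `D_C` remain in `D_C`. -/
theorem closed_loop_invariance {s d : ℕ}
    (Om S : Set (EuclideanSpace ℝ (Fin s))) (U : Set (EuclideanSpace ℝ (Fin d)))
    (hOm : IsCompact Om) (hU : IsCompact U) (hSOm : S ⊆ Om)
    (f : EuclideanSpace ℝ (Fin s) → EuclideanSpace ℝ (Fin d) → EuclideanSpace ℝ (Fin s))
    (hf : ContinuousOn (fun p => f p.1 p.2) (Om ×ˢ U))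
    (hfm : ∀ x ∈ Om, ∀ u ∈ U, f x u ∈ Om)
    (c : EuclideanSpace ℝ (Fin s) → EuclideanSpace ℝ (Fin d) → ℝ)
    (hc : ContinuousOn (fun p => c p.1 p.2) (Om ×ˢ U))
    (hc0 : ∀ x ∈ Om, ∀ u ∈ U, 0 ≤ c x u)
    -- the approximate value function Ṽ ≥ 0 on S and the feedback ũ
    (Vt : EuclideanSpace ℝ (Fin s) → ℝ) (hVt0 : ∀ x ∈ S, 0 ≤ Vt x)
    (ut : EuclideanSpace ℝ (Fin s) → EuclideanSpace ℝ (Fin d))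
    (hutU : ∀ x ∈ S, ut x ∈ U)
    -- ũ(x) attains the infimum inf_{u ∈ U} { c(x,u) + Ṽ(f(x,u)) }
    (hopt : ∀ x ∈ S, ∀ u ∈ U, c x (ut x) + Vt (f x (ut x)) ≤ c x u + Vt (f x u))
    (C η : ℝ) (hC : 0 < C) (hη0 : 0 < η) (hη1 : η < 1)
    -- D_C ⊆ R_η, where e(x) = inf_{u∈U} {c(x,u) + Ṽ(f(x,u))} - Ṽ(x) ≤ η c̃(x) on R_η
    (hDR : ∀ x ∈ S, Vt x < C →
      sInf {y : ℝ | ∃ u ∈ U, y = c x u + Vt (f x u)} - Vt x ≤ η * c x (ut x))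
    -- the closed loop map sends D_C into S, and the stage cost is positive on D_C
    (hfS : ∀ x ∈ S, Vt x < C → f x (ut x) ∈ S)
    (hcpos : ∀ x ∈ S, Vt x < C → 0 < c x (ut x))
    (x₀ : EuclideanSpace ℝ (Fin s)) (hx₀S : x₀ ∈ S) (hx₀C : Vt x₀ < C) :
    ∀ j : ℕ,
      (fun x => f x (ut x))^[j] x₀ ∈ S ∧ Vt ((fun x => f x (ut x))^[j] x₀) < C := by

  intro j
  induction j with
  | zero => exact ⟨hx₀S, hx₀C⟩
  | succ n ih =>
    obtain ⟨hS, hC'⟩ := ih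
    set x := (fun x => f x (ut x))^[n] x₀ with hx
    rw [Function.iterate_succ_apply']
    refine ⟨hfS x hS hC', ?_⟩
    have hle : c x (ut x) + Vt (f x (ut x)) ≤
        sInf {y : ℝ | ∃ u ∈ U, y = c x u + Vt (f x u)} := by
      refine le_csInf ⟨c x (ut x) + Vt (f x (ut x)), ut x, hutU x hS, rfl⟩ ?_
      rintro y ⟨u, hu, rfl⟩
      exact hopt x hS u hu
    have hDR' := hDR x hS hC'
    have hcp := hcpos x hS hC'
    have : Vt (f x (ut x)) ≤ Vt x - (1 - η) * c x (ut x) := by nlinarith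
    nlinarith
end

section
/- Under the hypotheses of the pseudo-contraction lemma with (x,u) = (0,0): if additionally f(0,0) = 0, Ω₂ = {x ∈ ℝ^s : ‖x‖_a ≤ r} ⊆ Ω₁ is a closed sublevel set of the norm ‖·‖_a, and F̄ x̃ ∈ U₁ for all x̃ ∈ Ω₂, then the closed-loop map g(x̃) = f(x̃, F̄ x̃) maps Ω₂ into Ω₂ and satisfies ‖g(x̃) − g(ỹ)‖_a ≤ (1 − ε) ‖x̃ − ỹ‖_a for all x̃, ỹ ∈ Ω₂; in particular g is a contraction of Ω₂ with respect to ‖·‖_a with fixed point 0. -/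
/-- Type clone without instances. -/
def NaClone (E : Type*) : Type _ := E

set_option maxHeartbeats 1000000 in
/-- Mean value inequality for an abstract norm `na` on a finite-dimensional space. -/
theorem na_mvt {E : Type*} [NormedAddCommGroup E] [NormedSpace ℝ E] [FiniteDimensional ℝ E]
    (na : E → ℝ)
    (hadd : ∀ x y, na (x + y) ≤ na x + na y)
    (hsmul : ∀ (r : ℝ) x, na (r • x) = |r| * na x)
    (hdef : ∀ x, na x = 0 ↔ x = 0)
    (S : Set E) (hS : Convex ℝ S) (g : E → E) (g' : E → E →L[ℝ] E)
    (hg : ∀ z ∈ S, HasFDerivWithinAt g (g' z) S z)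
    (K : ℝ) (hK : 0 ≤ K)
    (hbound : ∀ z ∈ S, ∀ v, na (g' z v) ≤ K * na v)
    (x y : E) (hx : x ∈ S) (hy : y ∈ S) :
    na (g x - g y) ≤ K * na (x - y) := by
  have hzero : na 0 = 0 := by
    have := hsmul 0 0; simpa using this
  have hneg : ∀ v, na (-v) = na v := by
    intro v; have := hsmul (-1) v; simpa using this
  let F := NaClone E
  letI : AddCommGroup F := (inferInstance : AddCommGroup E)
  letI : Module ℝ F := (inferInstance : Module ℝ E)
  letI : NormedAddCommGroup F := AddGroupNorm.toNormedAddCommGroup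
    { toFun := fun z : F => na (show E from z)
      map_zero' := hzero
      add_le' := hadd
      neg' := hneg
      eq_zero_of_map_eq_zero' := fun z h => (hdef z).1 h }
  letI : NormedSpace ℝ F := { norm_smul_le := fun c z => le_of_eq (hsmul c z) }
  letI : FiniteDimensional ℝ F := (inferInstance : FiniteDimensional ℝ E)
  have hnorm : ∀ z : F, ‖z‖ = na (show E from z) := fun _ => rfl
  let e : E ≃ₗ[ℝ] F :=
    { toFun := fun z => z
      invFun := fun z => z
      map_add' := fun _ _ => rfl
      map_smul' := fun _ _ => rfl
      left_inv := fun _ => rfl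
      right_inv := fun _ => rfl }
  let ι : E ≃L[ℝ] F := e.toContinuousLinearEquiv
  let S' : Set F := ι '' S
  have hS' : Convex ℝ S' := hS.linear_image (ι : E →L[ℝ] F).toLinearMap
  let h : F → F := fun z => ι (g (ι.symm z))
  let h' : F → (F →L[ℝ] F) := fun z =>
    ((ι : E →L[ℝ] F).comp (g' (ι.symm z))).comp (ι.symm : F →L[ℝ] E)
  have hderiv : ∀ z ∈ S', HasFDerivWithinAt h (h' z) S' z := by
    rintro z ⟨w, hw, rfl⟩
    have h1 : HasFDerivWithinAt g (g' w) S w := hg w hw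
    have h2 : HasFDerivWithinAt (fun z : F => g (ι.symm z)) ((g' w).comp (ι.symm : F →L[ℝ] E)) S' (ι w) := by
      have := h1.comp (x := ι w) (ι.symm.hasFDerivWithinAt (s := S'))
        (by rintro a ⟨b, hb, rfl⟩; simpa using hb)
      exact this
    have := ((ι : E →L[ℝ] F).hasFDerivAt.comp_hasFDerivWithinAt (ι w) h2)
    exact this
  have hbound' : ∀ z ∈ S', ‖h' z‖ ≤ K := by
    rintro z ⟨w, hw, rfl⟩
    refine ContinuousLinearMap.opNorm_le_bound _ hK ?_
    intro v
    have := hbound w hw (ι.symm v)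
    exact this
  have key := hS'.norm_image_sub_le_of_norm_hasFDerivWithin_le hderiv hbound'
    (Set.mem_image_of_mem _ hy) (Set.mem_image_of_mem _ hx)
  have : ‖h (ι x) - h (ι y)‖ ≤ K * ‖ι x - ι y‖ := key
  exact this

/-- under the hypotheses of the pseudo-contraction lemma with
`(x,u) = (0,0)`, if `f(0,0) = 0`, `Ω₂ = {x : ‖x‖_a ≤ r} ⊆ Ω₁` is a closed norm
ball and `F̄ x̃ ∈ U₁` for `x̃ ∈ Ω₂`, then the closed-loop map `g(x̃) = f(x̃, F̄ x̃)`
maps `Ω₂` into itself, is a `(1-ε)`-contraction on `Ω₂` with respect to `‖·‖_a`,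
and has `0` as fixed point. -/
theorem closed_loop_contraction {s d : ℕ}
    (na : EuclideanSpace ℝ (Fin s) → ℝ)
    (hna_add : ∀ x y, na (x + y) ≤ na x + na y)
    (hna_smul : ∀ (r : ℝ) x, na (r • x) = |r| * na x)
    (hna_def : ∀ x, na x = 0 ↔ x = 0)
    (Om : Set (EuclideanSpace ℝ (Fin s))) (U : Set (EuclideanSpace ℝ (Fin d)))
    (hOm : IsOpen Om) (hU : IsOpen U)
    (f : EuclideanSpace ℝ (Fin s) × EuclideanSpace ℝ (Fin d) → EuclideanSpace ℝ (Fin s))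
    (hf : ContDiffOn ℝ 1 f (Om ×ˢ U))
    (hf00 : f (0, 0) = 0)
    (Fb : EuclideanSpace ℝ (Fin s) →L[ℝ] EuclideanSpace ℝ (Fin d))
    (Om₁ : Set (EuclideanSpace ℝ (Fin s))) (U₁ : Set (EuclideanSpace ℝ (Fin d)))
    (hOm₁ : Om₁ ⊆ Om) (hU₁ : U₁ ⊆ U)
    (ε : ℝ) (hε : 0 < ε)
    (hM : ∀ y ∈ Om₁, ∀ w ∈ U₁, ∀ z,
      na (fderiv ℝ f (y, w) (z, Fb z)) ≤ (1 - ε) * na z)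
    (r : ℝ) (hr : 0 ≤ r)
    (Om₂ : Set (EuclideanSpace ℝ (Fin s)))
    (hOm₂def : Om₂ = {x | na x ≤ r}) (hOm₂ : Om₂ ⊆ Om₁)
    (hu : ∀ xt ∈ Om₂, Fb xt ∈ U₁) :
    (∀ xt ∈ Om₂, f (xt, Fb xt) ∈ Om₂) ∧
    (∀ xt ∈ Om₂, ∀ yt ∈ Om₂,
      na (f (xt, Fb xt) - f (yt, Fb yt)) ≤ (1 - ε) * na (xt - yt)) ∧
    f (0, Fb 0) = 0 := by
  have hzero : na 0 = 0 := by have := hna_smul 0 0; simpa using this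
  have hneg : ∀ v, na (-v) = na v := by
    intro v; have := hna_smul (-1) v; simpa using this
  have hnonneg : ∀ v, 0 ≤ na v := by
    intro v
    have h1 := hna_add v (-v)
    rw [add_neg_cancel, hzero, hneg] at h1
    linarith
  have h0mem : (0 : EuclideanSpace ℝ (Fin s)) ∈ Om₂ := by
    rw [hOm₂def]; simpa [hzero] using hr
  have hg0 : f (0, Fb 0) = 0 := by rw [map_zero]; exact hf00
  rcases subsingleton_or_nontrivial (EuclideanSpace ℝ (Fin s)) with hss | hnt
  · refine ⟨fun xt _ => ?_, fun xt _ yt _ => ?_, hg0⟩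
    · have : f (xt, Fb xt) = 0 := Subsingleton.elim _ _
      rw [this]; exact h0mem
    · have h1 : f (xt, Fb xt) - f (yt, Fb yt) = 0 := Subsingleton.elim _ _
      have h2 : xt - yt = 0 := Subsingleton.elim _ _
      rw [h1, h2, hzero]; simp
  -- nontrivial case: first show 1 - ε ≥ 0
  have hK : 0 ≤ 1 - ε := by
    obtain ⟨v, hv⟩ := exists_ne (0 : EuclideanSpace ℝ (Fin s))
    have hvpos : 0 < na v := lt_of_le_of_ne (hnonneg v) (fun h => hv ((hna_def v).1 h.symm))
    have := hM 0 (hOm₂ h0mem) (Fb 0) (hu 0 h0mem) v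
    nlinarith [hnonneg (fderiv ℝ f (0, Fb 0) (v, Fb v))]
  -- convexity of Om₂
  have hconv : Convex ℝ Om₂ := by
    rw [hOm₂def]
    intro a ha b hb p q hp hq hpq
    simp only [Set.mem_setOf_eq] at *
    calc na (p • a + q • b) ≤ na (p • a) + na (q • b) := hna_add _ _
      _ = p * na a + q * na b := by rw [hna_smul, hna_smul, abs_of_nonneg hp, abs_of_nonneg hq]
      _ ≤ p * r + q * r := by
          have := hnonneg a; have := hnonneg b
          gcongr
      _ = r := by rw [← add_mul, hpq, one_mul]
  -- closed-loop map and its derivative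
  set P : EuclideanSpace ℝ (Fin s) →L[ℝ]
      EuclideanSpace ℝ (Fin s) × EuclideanSpace ℝ (Fin d) :=
    (ContinuousLinearMap.id ℝ _).prod Fb with hP
  set g : EuclideanSpace ℝ (Fin s) → EuclideanSpace ℝ (Fin s) :=
    fun z => f (z, Fb z) with hg
  set g' : EuclideanSpace ℝ (Fin s) →
      (EuclideanSpace ℝ (Fin s) →L[ℝ] EuclideanSpace ℝ (Fin s)) :=
    fun z => (fderiv ℝ f (z, Fb z)).comp P with hg'
  have hderiv : ∀ z ∈ Om₂, HasFDerivWithinAt g (g' z) Om₂ z := by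
    intro z hz
    have hzOm : (z, Fb z) ∈ Om ×ˢ U :=
      ⟨hOm₁ (hOm₂ hz), hU₁ (hu z hz)⟩
    have hdf : DifferentiableAt ℝ f (z, Fb z) :=
      (hf.differentiableOn one_ne_zero).differentiableAt
        (((hOm.prod hU)).mem_nhds hzOm)
    have h1 : HasFDerivAt f (fderiv ℝ f (z, Fb z)) (P z) := hdf.hasFDerivAt
    exact (h1.comp z P.hasFDerivAt).hasFDerivWithinAt
  have hbound : ∀ z ∈ Om₂, ∀ v, na (g' z v) ≤ (1 - ε) * na v := by
    intro z hz v
    have := hM z (hOm₂ hz) (Fb z) (hu z hz) v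
    simpa [hg', hP] using this
  have hcontr : ∀ xt ∈ Om₂, ∀ yt ∈ Om₂,
      na (g xt - g yt) ≤ (1 - ε) * na (xt - yt) := fun xt hx yt hy =>
    na_mvt na hna_add hna_smul hna_def Om₂ hconv g g' hderiv (1 - ε) hK hbound xt yt hx hy
  refine ⟨fun xt hxt => ?_, hcontr, hg0⟩
  have h1 := hcontr xt hxt 0 h0mem
  have h2 : g 0 = 0 := hg0
  rw [h2, sub_zero, sub_zero] at h1
  rw [hOm₂def]
  have hxtr : na xt ≤ r := by rw [hOm₂def] at hxt; exact hxt
  have := hnonneg xt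
  simp only [Set.mem_setOf_eq]
  nlinarith
end

section
/- Let Ω ⊂ ℝ^s be compact, U ⊂ ℝ^d compact, f : Ω × U → Ω continuous, and c : Ω × U → [0,∞) continuous (hence bounded). For x₀ ∈ Ω and a control sequence (u_k) ∈ U^ℕ define the trajectory x_{k+1} = f(x_k, u_k), the total cost J(x₀,(u_k)) = Σ_{k=0}^∞ c(x_k, u_k) ∈ [0,∞], and the optimal value function V(x₀) = inf_{(u_k)} J(x₀,(u_k)). Suppose there is an open neighborhood N ⊆ Ω of 0 on which V is bounded, and that for every x₀ ∈ Ω there exist a finite control sequence and a number of steps k₁ steering x₀ into N (i.e. the corresponding trajectory satisfies x_{k₁} ∈ N). Then V is bounded on Ω, i.e. sup_{x ∈ Ω} V(x) < ∞. -/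
open scoped ENNReal

/-- The trajectory of the discrete time control system `x_{k+1} = f(x_k, u_k)`
starting at `x₀` under the control sequence `u`. -/
def traj {s d : ℕ}
    (f : EuclideanSpace ℝ (Fin s) → EuclideanSpace ℝ (Fin d) → EuclideanSpace ℝ (Fin s))
    (x₀ : EuclideanSpace ℝ (Fin s)) (u : ℕ → EuclideanSpace ℝ (Fin d)) : ℕ → EuclideanSpace ℝ (Fin s)
  | 0 => x₀
  | k + 1 => f (traj f x₀ u k) (u k)

/-- The optimal value function: the infimum, over all control sequences with
values in `U`, of the accumulated infinite-horizon cost. -/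
noncomputable def valueFn {s d : ℕ} (U : Set (EuclideanSpace ℝ (Fin d)))
    (f : EuclideanSpace ℝ (Fin s) → EuclideanSpace ℝ (Fin d) → EuclideanSpace ℝ (Fin s))
    (c : EuclideanSpace ℝ (Fin s) → EuclideanSpace ℝ (Fin d) → ℝ)
    (x₀ : EuclideanSpace ℝ (Fin s)) : ℝ≥0∞ :=
  ⨅ (u : ℕ → EuclideanSpace ℝ (Fin d)) (_ : ∀ k, u k ∈ U),
    ∑' k : ℕ, ENNReal.ofReal (c (traj f x₀ u k) (u k))

/-- The trajectory only depends on the controls used before time `k`. -/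
lemma traj_congr {s d : ℕ}
    (f : EuclideanSpace ℝ (Fin s) → EuclideanSpace ℝ (Fin d) → EuclideanSpace ℝ (Fin s))
    (x₀ : EuclideanSpace ℝ (Fin s)) (u v : ℕ → EuclideanSpace ℝ (Fin d)) (k : ℕ)
    (h : ∀ i < k, u i = v i) : traj f x₀ u k = traj f x₀ v k := by
  induction k with
  | zero => rfl
  | succ k ih =>
    simp only [traj, ih (fun i hi => h i (Nat.lt_succ_of_lt hi)), h k (Nat.lt_succ_self k)]

/-- Trajectories stay in the invariant set `Om`. -/
lemma traj_mem {s d : ℕ} {Om : Set (EuclideanSpace ℝ (Fin s))}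
    {U : Set (EuclideanSpace ℝ (Fin d))}
    {f : EuclideanSpace ℝ (Fin s) → EuclideanSpace ℝ (Fin d) → EuclideanSpace ℝ (Fin s)}
    (hfm : ∀ x ∈ Om, ∀ u ∈ U, f x u ∈ Om)
    {x₀ : EuclideanSpace ℝ (Fin s)} (hx₀ : x₀ ∈ Om)
    {u : ℕ → EuclideanSpace ℝ (Fin d)} (hu : ∀ k, u k ∈ U) (k : ℕ) :
    traj f x₀ u k ∈ Om := by
  induction k with
  | zero => exact hx₀
  | succ k ih => exact hfm _ ih _ (hu k)

/-- The trajectory at a fixed time depends continuously on the initial point. -/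
lemma traj_continuousOn {s d : ℕ} {Om : Set (EuclideanSpace ℝ (Fin s))}
    {U : Set (EuclideanSpace ℝ (Fin d))}
    {f : EuclideanSpace ℝ (Fin s) → EuclideanSpace ℝ (Fin d) → EuclideanSpace ℝ (Fin s)}
    (hf : ContinuousOn (fun p => f p.1 p.2) (Om ×ˢ U))
    (hfm : ∀ x ∈ Om, ∀ u ∈ U, f x u ∈ Om)
    {u : ℕ → EuclideanSpace ℝ (Fin d)} (hu : ∀ k, u k ∈ U) (k : ℕ) :
    ContinuousOn (fun y => traj f y u k) Om := by
  induction k with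
  | zero => exact continuousOn_id
  | succ k ih =>
    have : (fun y => traj f y u (k + 1)) =
        (fun p : (EuclideanSpace ℝ (Fin s)) × (EuclideanSpace ℝ (Fin d)) => f p.1 p.2) ∘
          (fun y => (traj f y u k, u k)) := rfl
    rw [this]
    exact hf.comp (ih.prodMk continuousOn_const)
      (fun y hy => ⟨traj_mem hfm hy hu k, hu k⟩)

/-- Shifted trajectory identity for a spliced control. -/
lemma traj_splice {s d : ℕ}
    (f : EuclideanSpace ℝ (Fin s) → EuclideanSpace ℝ (Fin d) → EuclideanSpace ℝ (Fin s))
    (x₀ : EuclideanSpace ℝ (Fin s)) (u w : ℕ → EuclideanSpace ℝ (Fin d)) (k₁ : ℕ) (j : ℕ) :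
    traj f x₀ (fun k => if k < k₁ then u k else w (k - k₁)) (k₁ + j)
      = traj f (traj f x₀ u k₁) w j := by
  induction j with
  | zero =>
    simpa [traj] using traj_congr f x₀ (fun k => if k < k₁ then u k else w (k - k₁)) u k₁
      (fun i hi => if_pos hi)
  | succ j ih =>
    have h1 : k₁ + (j + 1) = (k₁ + j) + 1 := by ring
    rw [h1]
    show f (traj f x₀ _ (k₁ + j)) _ = _
    rw [ih]
    have h2 : ¬ (k₁ + j < k₁) := by omega
    simp only [traj, if_neg h2, Nat.add_sub_cancel_left]

/-- Dynamic programming inequality: the value at `x₀` is at most the cost of any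
finite admissible control segment plus the value at the reached point. -/
lemma valueFn_le_sum_add {s d : ℕ} (U : Set (EuclideanSpace ℝ (Fin d)))
    (f : EuclideanSpace ℝ (Fin s) → EuclideanSpace ℝ (Fin d) → EuclideanSpace ℝ (Fin s))
    (c : EuclideanSpace ℝ (Fin s) → EuclideanSpace ℝ (Fin d) → ℝ)
    (x₀ : EuclideanSpace ℝ (Fin s)) (u : ℕ → EuclideanSpace ℝ (Fin d))
    (hu : ∀ k, u k ∈ U) (k₁ : ℕ) :
    valueFn U f c x₀ ≤
      (∑ k ∈ Finset.range k₁, ENNReal.ofReal (c (traj f x₀ u k) (u k)))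
        + valueFn U f c (traj f x₀ u k₁) := by
  set S := ∑ k ∈ Finset.range k₁, ENNReal.ofReal (c (traj f x₀ u k) (u k)) with hS
  simp only [valueFn]
  rw [ENNReal.add_iInf]
  refine le_iInf fun w => ?_
  rw [ENNReal.add_iInf]
  refine le_iInf fun hw => ?_
  set v : ℕ → EuclideanSpace ℝ (Fin d) := fun k => if k < k₁ then u k else w (k - k₁) with hv
  have hvU : ∀ k, v k ∈ U := by
    intro k; by_cases h : k < k₁ <;> simp [hv, h, hu k, hw (k - k₁)]
  refine iInf₂_le_of_le v hvU ?_
  have hsplit : (∑ i ∈ Finset.range k₁, ENNReal.ofReal (c (traj f x₀ v i) (v i)))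
      + ∑' i : ℕ, ENNReal.ofReal (c (traj f x₀ v (i + k₁)) (v (i + k₁)))
      = ∑' k : ℕ, ENNReal.ofReal (c (traj f x₀ v k) (v k)) :=
    Summable.sum_add_tsum_nat_add' (f := fun k => ENNReal.ofReal (c (traj f x₀ v k) (v k)))
      (k := k₁) ENNReal.summable
  rw [← hsplit]
  refine add_le_add ?_ ?_
  · refine Finset.sum_le_sum fun i hi => ?_
    have hiu : traj f x₀ v i = traj f x₀ u i :=
      traj_congr f x₀ v u i (fun j hj => if_pos (lt_of_lt_of_le hj
        (Finset.mem_range.mp hi).le))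
    have hvi : v i = u i := if_pos (Finset.mem_range.mp hi)
    rw [hiu, hvi]
  · refine Summable.tsum_le_tsum (fun i => ?_) ENNReal.summable ENNReal.summable
    have h1 : traj f x₀ v (i + k₁) = traj f (traj f x₀ u k₁) w i := by
      rw [Nat.add_comm i k₁]; exact traj_splice f x₀ u w k₁ i
    have h2 : v (i + k₁) = w i := by
      have : ¬ (i + k₁ < k₁) := by omega
      simp [hv, this]
    rw [h1, h2]

/-- if the optimal value function `V` is bounded on an open
neighborhood `N ⊆ Ω` of `0` and every point of `Ω` can be steered into `N` in
finitely many steps, then `V` is bounded on `Ω`. -/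
theorem value_function_bounded {s d : ℕ}
    (Om : Set (EuclideanSpace ℝ (Fin s))) (U : Set (EuclideanSpace ℝ (Fin d)))
    (hOm : IsCompact Om) (hU : IsCompact U) (h0 : (0 : EuclideanSpace ℝ (Fin s)) ∈ Om)
    (f : EuclideanSpace ℝ (Fin s) → EuclideanSpace ℝ (Fin d) → EuclideanSpace ℝ (Fin s))
    (hf : ContinuousOn (fun p => f p.1 p.2) (Om ×ˢ U))
    (hfm : ∀ x ∈ Om, ∀ u ∈ U, f x u ∈ Om)
    (c : EuclideanSpace ℝ (Fin s) → EuclideanSpace ℝ (Fin d) → ℝ)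
    (hc : ContinuousOn (fun p => c p.1 p.2) (Om ×ˢ U))
    (hc0 : ∀ x ∈ Om, ∀ u ∈ U, 0 ≤ c x u)
    (N : Set (EuclideanSpace ℝ (Fin s))) (hNopen : IsOpen N)
    (h0N : (0 : EuclideanSpace ℝ (Fin s)) ∈ N) (hNOm : N ⊆ Om)
    -- V is bounded on N
    (hbdN : ∃ M : ℝ, ∀ x ∈ N, valueFn U f c x ≤ ENNReal.ofReal M)
    -- every point of Ω can be steered into N in finitely many steps
    (hsteer : ∀ x₀ ∈ Om, ∃ (u : ℕ → EuclideanSpace ℝ (Fin d)) (k₁ : ℕ),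
      (∀ k, u k ∈ U) ∧ traj f x₀ u k₁ ∈ N) :
    ∃ M : ℝ, ∀ x ∈ Om, valueFn U f c x ≤ ENNReal.ofReal M := by
  classical
  obtain ⟨M₀, hM₀⟩ := hbdN
  -- a bound on the cost over the compact set
  obtain ⟨C, hC⟩ := (hOm.prod hU).exists_bound_of_continuousOn hc
  set C' : ℝ := max C 0 with hC'def
  have hC' : ∀ x ∈ Om, ∀ v ∈ U, c x v ≤ C' := by
    intro x hx v hv
    calc c x v ≤ ‖c x v‖ := le_abs_self _
    _ ≤ C := hC (x, v) ⟨hx, hv⟩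
    _ ≤ C' := le_max_left _ _
  -- for each point of Om choose a steering control, a time, and an open neighborhood
  have key : ∀ z ∈ Om, ∃ (u : ℕ → EuclideanSpace ℝ (Fin d)) (k₁ : ℕ)
      (O : Set (EuclideanSpace ℝ (Fin s))), (∀ k, u k ∈ U) ∧ IsOpen O ∧ z ∈ O ∧
      ∀ y ∈ O ∩ Om, traj f y u k₁ ∈ N := by
    intro z hz
    obtain ⟨u, k₁, hu, hreach⟩ := hsteer z hz
    have hcont := (traj_continuousOn hf hfm hu k₁) z hz
    have hmem : (fun y => traj f y u k₁) ⁻¹' N ∈ nhdsWithin z Om :=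
      hcont (hNopen.mem_nhds hreach)
    rw [mem_nhdsWithin] at hmem
    obtain ⟨O, hOopen, hzO, hOsub⟩ := hmem
    exact ⟨u, k₁, O, hu, hOopen, hzO, fun y hy => hOsub hy⟩
  choose! u k₁ O huU hOopen hzO hOsteer using key
  -- finite subcover
  obtain ⟨T, hTsub, hTfin, hTcover⟩ := hOm.elim_finite_subcover_image
    (fun z hz => hOopen z hz) (fun x hx => Set.mem_biUnion hx (hzO x hx))
  -- the uniform bound
  haveI := hTfin.fintype
  set K : ℕ := hTfin.toFinset.sup k₁ with hK
  refine ⟨K * C' + max M₀ 0, ?_⟩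
  intro x hx
  obtain ⟨z, hzT, hxO⟩ := Set.mem_iUnion₂.mp (hTcover hx)
  have hzOm : z ∈ Om := hTsub hzT
  have hreach : traj f x (u z) (k₁ z) ∈ N := hOsteer z hzOm x ⟨hxO, hx⟩
  have hdp := valueFn_le_sum_add U f c x (u z) (huU z hzOm) (k₁ z)
  have hsum : (∑ k ∈ Finset.range (k₁ z), ENNReal.ofReal (c (traj f x (u z) k) ((u z) k)))
      ≤ ENNReal.ofReal ((K : ℝ) * C') := by
    calc (∑ k ∈ Finset.range (k₁ z), ENNReal.ofReal (c (traj f x (u z) k) ((u z) k)))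
        ≤ ∑ _k ∈ Finset.range (k₁ z), ENNReal.ofReal C' := by
          refine Finset.sum_le_sum fun k _ => ENNReal.ofReal_le_ofReal ?_
          exact hC' _ (traj_mem hfm hx (huU z hzOm) k) _ (huU z hzOm k)
    _ = (k₁ z) * ENNReal.ofReal C' := by
          rw [Finset.sum_const, Finset.card_range, nsmul_eq_mul]
    _ ≤ (K : ℝ≥0∞) * ENNReal.ofReal C' := by
          gcongr
          exact_mod_cast Nat.cast_le.mpr (Finset.le_sup (hTfin.mem_toFinset.mpr hzT))
    _ = ENNReal.ofReal ((K : ℝ) * C') := by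
          rw [ENNReal.ofReal_mul (by positivity), ENNReal.ofReal_natCast]
  have hval : valueFn U f c (traj f x (u z) (k₁ z)) ≤ ENNReal.ofReal (max M₀ 0) :=
    (hM₀ _ hreach).trans (ENNReal.ofReal_le_ofReal (le_max_left _ _))
  calc valueFn U f c x ≤ _ + _ := hdp
  _ ≤ ENNReal.ofReal ((K : ℝ) * C') + ENNReal.ofReal (max M₀ 0) := add_le_add hsum hval
  _ = ENNReal.ofReal ((K : ℝ) * C' + max M₀ 0) := by
        rw [ENNReal.ofReal_add (by positivity) (le_max_right _ _)]
end

section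
/- Under the hypotheses of the appendix (f : Ω × U → Ω continuously differentiable with f(0,0) = 0 and Lipschitz in the state uniformly in the control; c : Ω × U → [0,∞) twice continuously differentiable and Lipschitz in state and control with c(0,0) = 0 and c(x,u) > 0 for u ≠ 0; the system stabilizable on the compact set Ω, i.e. V(x) < ∞ for all x ∈ Ω; and a linear feedback F̄ for which the spectral radius of ∂_x f(0,0) + ∂_u f(0,0) F̄ is strictly less than 1), there exist ε₁ > 0 and L_loc > 0 such that the optimal value function V is Lipschitz continuous with constant L_loc on the ball of radius 2ε₁ around 0: |V(x) − V(y)| ≤ L_loc ‖x − y‖ for all x, y with ‖x‖, ‖y‖ < 2ε₁. -/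
open scoped ENNReal

lemma geom_conv_sum (σ σh : ℝ) (h0 : 0 ≤ σ) (hlt : σ < σh) :
    ∀ k, ∑ j ∈ Finset.range (k + 1), σ ^ (k - j) * σh ^ j ≤ σh ^ (k + 1) / (σh - σ) := by
  have hh : 0 < σh := lt_of_le_of_lt h0 hlt
  have hd : 0 < σh - σ := by linarith
  intro k
  induction k with
  | zero =>
    have h1 : ∑ j ∈ Finset.range (0 + 1), σ ^ (0 - j) * σh ^ j = 1 := by norm_num
    have h2 : σh ^ (0 + 1) = σh := by norm_num
    rw [h1, le_div_iff₀ hd, h2]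
    linarith
  | succ k ih =>
    rw [Finset.sum_range_succ]
    have h1 : ∑ j ∈ Finset.range (k + 1), σ ^ (k + 1 - j) * σh ^ j
        = σ * ∑ j ∈ Finset.range (k + 1), σ ^ (k - j) * σh ^ j := by
      rw [Finset.mul_sum]
      apply Finset.sum_congr rfl
      intro j hj
      have hj' : j ≤ k := Nat.lt_succ_iff.mp (Finset.mem_range.mp hj)
      have : k + 1 - j = (k - j) + 1 := by omega
      rw [this, pow_succ]; ring
    have h2 : k + 1 - (k + 1) = 0 := by omega
    rw [h1, h2, pow_zero, one_mul]
    have h3 : σ * ∑ j ∈ Finset.range (k + 1), σ ^ (k - j) * σh ^ j ≤ σ * (σh ^ (k + 1) / (σh - σ)) :=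
      mul_le_mul_of_nonneg_left ih h0
    have h4 : σ * (σh ^ (k + 1) / (σh - σ)) + σh ^ (k + 1) = σh ^ (k + 2) / (σh - σ) := by
      field_simp; ring
    linarith

lemma pow_norm_decay {E : Type*} [NormedAddCommGroup E] [NormedSpace ℝ E]
    (T : E →L[ℝ] E) {n : ℕ} (hn : 0 < n) (hTn : ‖T ^ n‖ < 1) :
    ∃ C σ : ℝ, 1 ≤ C ∧ 0 < σ ∧ σ < 1 ∧ ∀ k, ‖T ^ k‖ ≤ C * σ ^ k := by
  set a : ℝ := max ‖T ^ n‖ (1 / 2) with ha_def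
  have ha0 : 0 < a := lt_max_of_lt_right (by norm_num)
  have ha1 : a < 1 := max_lt hTn (by norm_num)
  have hTna : ‖T ^ n‖ ≤ a := le_max_left _ _
  set σ : ℝ := a ^ ((n : ℝ)⁻¹) with hσ_def
  have hσ0 : 0 < σ := Real.rpow_pos_of_pos ha0 _
  have hσ1 : σ < 1 := Real.rpow_lt_one ha0.le ha1 (by positivity)
  have hσn : σ ^ n = a := by
    rw [hσ_def, ← Real.rpow_natCast (a ^ ((n : ℝ)⁻¹)) n, ← Real.rpow_mul ha0.le,
      inv_mul_cancel₀ (by exact_mod_cast hn.ne'), Real.rpow_one]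
  set B : ℝ := ∑ i ∈ Finset.range n, ‖T ^ i‖ with hB_def
  have hB : ∀ r < n, ‖T ^ r‖ ≤ B := by
    intro r hr
    exact Finset.single_le_sum (fun i _ => norm_nonneg _) (Finset.mem_range.mpr hr)
  have hBnn : 0 ≤ B := Finset.sum_nonneg fun i _ => norm_nonneg _
  refine ⟨max (B / a) 1, σ, le_max_right _ _, hσ0, hσ1, fun k => ?_⟩
  obtain ⟨q, r, hr, hk⟩ : ∃ q r, r < n ∧ k = n * q + r :=
    ⟨k / n, k % n, Nat.mod_lt _ hn, (Nat.div_add_mod k n).symm ▸ (by omega)⟩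
  have hTk : ‖T ^ k‖ ≤ a ^ q * B := by
    have key : ∀ q', ‖(T ^ n) ^ q' * T ^ r‖ ≤ a ^ q' * B := by
      intro q'
      induction q' with
      | zero => simpa using hB r hr
      | succ q' ih =>
        have h1 : (T ^ n) ^ (q' + 1) * T ^ r = T ^ n * ((T ^ n) ^ q' * T ^ r) := by
          rw [pow_succ', mul_assoc]
        rw [h1]
        calc ‖T ^ n * ((T ^ n) ^ q' * T ^ r)‖ ≤ ‖T ^ n‖ * ‖(T ^ n) ^ q' * T ^ r‖ := norm_mul_le _ _
          _ ≤ a * (a ^ q' * B) := by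
              apply mul_le_mul hTna ih (norm_nonneg _) ha0.le
          _ = a ^ (q' + 1) * B := by ring
    have : T ^ k = (T ^ n) ^ q * T ^ r := by rw [hk, pow_add, pow_mul]
    rw [this]; exact key q
  have hσr : a ≤ σ ^ r := by
    rw [← hσn]; exact pow_le_pow_of_le_one hσ0.le hσ1.le hr.le
  have haq : a ^ q * B ≤ (B / a) * σ ^ k := by
    have h1 : σ ^ k = σ ^ (n * q) * σ ^ r := by rw [hk, pow_add]
    have h2 : σ ^ (n * q) = a ^ q := by rw [pow_mul, hσn]
    have h3 : a ^ q * B * a ≤ a ^ q * B * σ ^ r :=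
      mul_le_mul_of_nonneg_left hσr (by positivity)
    rw [h1, h2]
    rw [div_mul_eq_mul_div, le_div_iff₀ ha0]
    nlinarith [pow_nonneg ha0.le q]
  calc ‖T ^ k‖ ≤ a ^ q * B := hTk
    _ ≤ (B / a) * σ ^ k := haq
    _ ≤ max (B / a) 1 * σ ^ k := mul_le_mul_of_nonneg_right (le_max_left _ _) (by positivity)

lemma perturbed_decay {E : Type*} [NormedAddCommGroup E] [NormedSpace ℝ E]
    (T : E →L[ℝ] E) (C σ η : ℝ) (hC : 1 ≤ C) (hσ0 : 0 < σ) (hσ1 : σ < 1)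
    (hη : 0 ≤ η)
    (hηs : C * η ≤ ((1 + σ) / 2 - σ) ^ 2 / ((1 + σ) / 2))
    (hT : ∀ k, ‖T ^ k‖ ≤ C * σ ^ k)
    (e : ℕ → E)
    (hrec : ∀ k, (∀ j ≤ k, ‖e j‖ ≤ C * ((1 + σ) / 2) ^ j * ‖e 0‖) →
      ‖e (k + 1) - T (e k)‖ ≤ η * ‖e k‖) :
    ∀ k, ‖e k‖ ≤ C * ((1 + σ) / 2) ^ k * ‖e 0‖ := by
  set σh : ℝ := (1 + σ) / 2 with hσh_def
  have hσσh : σ < σh := by rw [hσh_def]; linarith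
  have hσh1 : σh < 1 := by rw [hσh_def]; linarith
  have hσh0 : 0 < σh := lt_trans hσ0 hσσh
  have hd : 0 < σh - σ := by linarith
  -- the explicit solution formula
  have hid : ∀ m, e m = (T ^ m) (e 0)
      + ∑ j ∈ Finset.range m, (T ^ (m - 1 - j)) (e (j + 1) - T (e j)) := by
    intro m
    induction m with
    | zero => simp
    | succ m ih =>
      have h0 : e (m + 1) = T (e m) + (e (m + 1) - T (e m)) := by abel
      rw [h0]
      nth_rewrite 1 [ih]
      rw [map_add, map_sum, Finset.sum_range_succ]
      have hTm : T ((T ^ m) (e 0)) = (T ^ (m + 1)) (e 0) := by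
        rw [pow_succ', ContinuousLinearMap.mul_apply]
      have hTj : ∀ j ∈ Finset.range m,
          T ((T ^ (m - 1 - j)) (e (j + 1) - T (e j)))
            = (T ^ (m + 1 - 1 - j)) (e (j + 1) - T (e j)) := by
        intro j hj
        have hj' : j < m := Finset.mem_range.mp hj
        have : m + 1 - 1 - j = (m - 1 - j) + 1 := by omega
        rw [this, pow_succ', ContinuousLinearMap.mul_apply]
      have hlast : m + 1 - 1 - m = 0 := by omega
      rw [hTm, Finset.sum_congr rfl hTj, hlast, pow_zero, ContinuousLinearMap.one_apply]
      abel
  suffices H : ∀ k, ∀ j ≤ k, ‖e j‖ ≤ C * σh ^ j * ‖e 0‖ by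
    intro k; exact H k k le_rfl
  intro k
  induction k with
  | zero =>
    intro j hj
    interval_cases j
    have : (1:ℝ) * ‖e 0‖ ≤ C * ‖e 0‖ := mul_le_mul_of_nonneg_right hC (norm_nonneg _)
    simpa using this
  | succ k ih =>
    intro j hj
    rcases lt_or_eq_of_le hj with hj' | hj'
    · exact ih j (Nat.lt_succ_iff.mp hj')
    · subst hj'
      have hC0 : (0:ℝ) < C := lt_of_lt_of_le one_pos hC
      have hK0 : (0:ℝ) ≤ C * η * C * ‖e 0‖ :=
        mul_nonneg (mul_nonneg (mul_nonneg hC0.le hη) hC0.le) (norm_nonneg _)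
      have hrecs : ∀ j ≤ k, ‖e (j + 1) - T (e j)‖ ≤ η * ‖e j‖ := fun j hjk =>
        hrec j (fun i hi => ih i (le_trans hi hjk))
      have hterm : ∀ j ∈ Finset.range (k + 1),
          ‖(T ^ (k + 1 - 1 - j)) (e (j + 1) - T (e j))‖
            ≤ C * η * C * ‖e 0‖ * (σ ^ (k - j) * σh ^ j) := by
        intro j hjm
        have hjk : j ≤ k := Nat.lt_succ_iff.mp (Finset.mem_range.mp hjm)
        have h1 : k + 1 - 1 - j = k - j := by omega
        rw [h1]
        calc ‖(T ^ (k - j)) (e (j + 1) - T (e j))‖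
            ≤ ‖T ^ (k - j)‖ * ‖e (j + 1) - T (e j)‖ := ContinuousLinearMap.le_opNorm _ _
          _ ≤ C * σ ^ (k - j) * (η * ‖e j‖) :=
              mul_le_mul (hT _) (hrecs j hjk) (norm_nonneg _)
                (mul_nonneg hC0.le (pow_nonneg hσ0.le _))
          _ ≤ C * σ ^ (k - j) * (η * (C * σh ^ j * ‖e 0‖)) := by
              apply mul_le_mul_of_nonneg_left _ (mul_nonneg hC0.le (pow_nonneg hσ0.le _))
              exact mul_le_mul_of_nonneg_left (ih j hjk) hη
          _ = C * η * C * ‖e 0‖ * (σ ^ (k - j) * σh ^ j) := by ring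
      have hsum : ∑ j ∈ Finset.range (k + 1), ‖(T ^ (k + 1 - 1 - j)) (e (j + 1) - T (e j))‖
          ≤ C * η * C * ‖e 0‖ * (σh ^ (k + 1) / (σh - σ)) := by
        calc ∑ j ∈ Finset.range (k + 1), ‖(T ^ (k + 1 - 1 - j)) (e (j + 1) - T (e j))‖
            ≤ ∑ j ∈ Finset.range (k + 1), C * η * C * ‖e 0‖ * (σ ^ (k - j) * σh ^ j) :=
              Finset.sum_le_sum hterm
          _ = C * η * C * ‖e 0‖ * ∑ j ∈ Finset.range (k + 1), σ ^ (k - j) * σh ^ j := by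
              rw [Finset.mul_sum]
          _ ≤ C * η * C * ‖e 0‖ * (σh ^ (k + 1) / (σh - σ)) :=
              mul_le_mul_of_nonneg_left (geom_conv_sum σ σh hσ0.le hσσh k) hK0
      have hnorm : ‖e (k + 1)‖ ≤ ‖(T ^ (k + 1)) (e 0)‖
          + ∑ j ∈ Finset.range (k + 1), ‖(T ^ (k + 1 - 1 - j)) (e (j + 1) - T (e j))‖ := by
        rw [hid (k + 1)]
        refine le_trans (norm_add_le _ _) ?_
        gcongr
        exact norm_sum_le _ _
      have hT1 : ‖(T ^ (k + 1)) (e 0)‖ ≤ C * σ ^ (k + 1) * ‖e 0‖ :=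
        le_trans (ContinuousLinearMap.le_opNorm _ _)
          (mul_le_mul_of_nonneg_right (hT _) (norm_nonneg _))
      have hnum : σ ^ (k + 1) + C * η * (σh ^ (k + 1) / (σh - σ)) ≤ σh ^ (k + 1) := by
        have h1 : σ ^ (k + 1) ≤ σ * σh ^ k := by
          rw [pow_succ']
          exact mul_le_mul_of_nonneg_left (pow_le_pow_left₀ hσ0.le hσσh.le k) hσ0.le
        have h2 : C * η * (σh ^ (k + 1) / (σh - σ)) ≤ (σh - σ) * σh ^ k := by
          have hpos : (0:ℝ) < σh ^ (k + 1) / (σh - σ) := by positivity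
          calc C * η * (σh ^ (k + 1) / (σh - σ))
              ≤ (σh - σ) ^ 2 / σh * (σh ^ (k + 1) / (σh - σ)) :=
                mul_le_mul_of_nonneg_right hηs hpos.le
            _ = (σh - σ) * σh ^ k := by field_simp; ring
        have h3 : σ * σh ^ k + (σh - σ) * σh ^ k = σh ^ (k + 1) := by rw [pow_succ']; ring
        linarith
      calc ‖e (k + 1)‖
          ≤ C * σ ^ (k + 1) * ‖e 0‖ + C * η * C * ‖e 0‖ * (σh ^ (k + 1) / (σh - σ)) := by
            linarith
        _ = C * ‖e 0‖ * (σ ^ (k + 1) + C * η * (σh ^ (k + 1) / (σh - σ))) := by ring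
        _ ≤ C * ‖e 0‖ * σh ^ (k + 1) :=
            mul_le_mul_of_nonneg_left hnum (mul_nonneg hC0.le (norm_nonneg _))
        _ = C * σh ^ (k + 1) * ‖e 0‖ := by ring

set_option maxHeartbeats 2000000 in
/-- under the assumptions of the appendix, there are `ε₁ > 0` and
`L_loc > 0` such that the optimal value function is Lipschitz continuous with
constant `L_loc` on the ball of radius `2ε₁` around `0`. -/

theorem value_function_locally_lipschitz {s d : ℕ}
    (Om : Set (EuclideanSpace ℝ (Fin s))) (U : Set (EuclideanSpace ℝ (Fin d)))
    (hOm : IsCompact Om) (hU : IsCompact U)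
    (hOm0 : Om ∈ nhds (0 : EuclideanSpace ℝ (Fin s)))
    (hU0 : U ∈ nhds (0 : EuclideanSpace ℝ (Fin d)))
    (f : EuclideanSpace ℝ (Fin s) → EuclideanSpace ℝ (Fin d) → EuclideanSpace ℝ (Fin s))
    (hfm : ∀ x ∈ Om, ∀ u ∈ U, f x u ∈ Om)
    -- f is continuously differentiable with f(0,0) = 0
    (hf : ContDiffOn ℝ 1 (fun p : EuclideanSpace ℝ (Fin s) × EuclideanSpace ℝ (Fin d) => f p.1 p.2) (Om ×ˢ U))
    (hf00 : f 0 0 = 0)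
    -- f is Lipschitz in the state uniformly in the control
    (Lf : ℝ) (hLf : 0 ≤ Lf)
    (hflip : ∀ x ∈ Om, ∀ y ∈ Om, ∀ u ∈ U, ‖f x u - f y u‖ ≤ Lf * ‖x - y‖)
    -- the cost c is C², nonnegative, with c(0,0) = 0 and c(x,u) > 0 for u ≠ 0
    (c : EuclideanSpace ℝ (Fin s) → EuclideanSpace ℝ (Fin d) → ℝ)
    (hc : ContDiffOn ℝ 2 (fun p : EuclideanSpace ℝ (Fin s) × EuclideanSpace ℝ (Fin d) => c p.1 p.2) (Om ×ˢ U))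
    (hc0 : ∀ x ∈ Om, ∀ u ∈ U, 0 ≤ c x u)
    (hc00 : c 0 0 = 0)
    (hcpos : ∀ x ∈ Om, ∀ u ∈ U, u ≠ 0 → 0 < c x u)
    -- c is Lipschitz in the state and in the control
    (Lc Lu : ℝ)
    (hclip : ∀ x ∈ Om, ∀ y ∈ Om, ∀ u ∈ U, |c x u - c y u| ≤ Lc * ‖x - y‖)
    (hculip : ∀ x ∈ Om, ∀ u ∈ U, ∀ u' ∈ U, |c x u - c x u'| ≤ Lu * ‖u - u'‖)
    -- outside every neighborhood of 0 the cost is bounded away from 0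
    (hcinf : ∀ N : Set (EuclideanSpace ℝ (Fin s)), N ∈ nhds (0 : EuclideanSpace ℝ (Fin s)) →
      ∃ δ > 0, ∀ x ∈ Om \ N, ∀ u ∈ U, δ ≤ c x u)
    -- the system is stabilizable on all of Ω
    (hstab : ∀ x ∈ Om, valueFn U f c x < ⊤)
    -- a linear feedback whose closed-loop linearization at 0 has spectral radius < 1
    -- (equivalently, some power of it has operator norm < 1)
    (Fb : EuclideanSpace ℝ (Fin s) →L[ℝ] EuclideanSpace ℝ (Fin d))
    (hspec : ∃ nn : ℕ,
      ‖((fderiv ℝ (fun p : EuclideanSpace ℝ (Fin s) × EuclideanSpace ℝ (Fin d) => f p.1 p.2) (0, 0)).comp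
          ((ContinuousLinearMap.id ℝ (EuclideanSpace ℝ (Fin s))).prod Fb)) ^ nn‖ < 1) :
    ∃ ε₁ > (0:ℝ), ∃ Lloc > (0:ℝ), ∀ x y : EuclideanSpace ℝ (Fin s),
      ‖x‖ < 2 * ε₁ → ‖y‖ < 2 * ε₁ →
      |(valueFn U f c x).toReal - (valueFn U f c y).toReal| ≤ Lloc * ‖x - y‖ := by
  rcases subsingleton_or_nontrivial (EuclideanSpace ℝ (Fin s)) with hsub | hnt
  · refine ⟨1, one_pos, 1, one_pos, fun x y _ _ => ?_⟩
    have hxy : x = y := Subsingleton.elim x y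
    subst hxy
    simp
  obtain ⟨n, hn⟩ := hspec
  set F : EuclideanSpace ℝ (Fin s) × EuclideanSpace ℝ (Fin d) → EuclideanSpace ℝ (Fin s) :=
    fun p => f p.1 p.2 with hF_def
  set DF := fderiv ℝ F (0, 0) with hDF_def
  set T := DF.comp ((ContinuousLinearMap.id ℝ (EuclideanSpace ℝ (Fin s))).prod Fb) with hT_def
  have hnpos : 0 < n := by
    rcases Nat.eq_zero_or_pos n with h0 | h0
    · exfalso
      rw [h0, pow_zero] at hn
      have h1 : ‖(1 : EuclideanSpace ℝ (Fin s) →L[ℝ] EuclideanSpace ℝ (Fin s))‖ = 1 := by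
        rw [ContinuousLinearMap.one_def, ContinuousLinearMap.norm_id]
      rw [h1] at hn
      exact lt_irrefl 1 hn
    · exact h0
  obtain ⟨C, σ, hC, hσ0, hσ1, hTpow⟩ := pow_norm_decay T hnpos hn
  have hC0 : (0:ℝ) < C := lt_of_lt_of_le one_pos hC
  set σh : ℝ := (1 + σ) / 2 with hσh_def
  have hσσh : σ < σh := by rw [hσh_def]; linarith
  have hσh1 : σh < 1 := by rw [hσh_def]; linarith
  have hσh0 : 0 < σh := lt_trans hσ0 hσσh
  set ηf : ℝ := (σh - σ) ^ 2 / σh / C with hηf_def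
  have hηf0 : 0 < ηf := by
    apply div_pos (div_pos (pow_pos (by linarith : (0:ℝ) < σh - σ) 2) hσh0) hC0
  have hηs : C * ηf ≤ (σh - σ) ^ 2 / σh := by
    rw [hηf_def, mul_div_cancel₀ _ hC0.ne']
  set η0 : ℝ := ηf / (1 + ‖Fb‖) with hη0_def
  have hFb1 : (0:ℝ) < 1 + ‖Fb‖ := by positivity
  have hη00 : 0 < η0 := div_pos hηf0 hFb1
  have hOU : Om ×ˢ U ∈ nhds ((0, 0) : EuclideanSpace ℝ (Fin s) × EuclideanSpace ℝ (Fin d)) :=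
    prod_mem_nhds hOm0 hU0
  have hstrict : HasStrictFDerivAt F DF (0, 0) :=
    (hf.contDiffAt hOU).hasStrictFDerivAt one_ne_zero
  have hev := hstrict.isLittleO.def hη00
  rw [Metric.eventually_nhds_iff] at hev
  obtain ⟨r, hr0, hball⟩ := hev
  have hsd : ∀ p q : EuclideanSpace ℝ (Fin s) × EuclideanSpace ℝ (Fin d),
      ‖p‖ < r → ‖q‖ < r → ‖F p - F q - DF (p - q)‖ ≤ η0 * ‖p - q‖ := by
    intro p q hp hq
    refine hball (y := (p, q)) ?_
    have hp' : dist p ((0, 0) : EuclideanSpace ℝ (Fin s) × EuclideanSpace ℝ (Fin d)) < r := by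
      rw [show ((0, 0) : EuclideanSpace ℝ (Fin s) × EuclideanSpace ℝ (Fin d)) = 0 from rfl,
        dist_zero_right]
      exact hp
    have hq' : dist q ((0, 0) : EuclideanSpace ℝ (Fin s) × EuclideanSpace ℝ (Fin d)) < r := by
      rw [show ((0, 0) : EuclideanSpace ℝ (Fin s) × EuclideanSpace ℝ (Fin d)) = 0 from rfl,
        dist_zero_right]
      exact hq
    rw [Prod.dist_eq]
    exact max_lt hp' hq'
  obtain ⟨rOm, hrOm0, hrOm⟩ := Metric.mem_nhds_iff.mp hOm0
  obtain ⟨rU, hrU0, hrU⟩ := Metric.mem_nhds_iff.mp hU0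
  have h0Om : (0 : EuclideanSpace ℝ (Fin s)) ∈ Om := mem_of_mem_nhds hOm0
  have h0U : (0 : EuclideanSpace ℝ (Fin d)) ∈ U := mem_of_mem_nhds hU0
  set εx : ℝ := min r rOm / 4 with hεx_def
  set εu : ℝ := min r rU / 4 with hεu_def
  have hεx0 : 0 < εx := by rw [hεx_def]; exact div_pos (lt_min hr0 hrOm0) (by norm_num)
  have hεu0 : 0 < εu := by rw [hεu_def]; exact div_pos (lt_min hr0 hrU0) (by norm_num)
  have hballOm : ∀ z : EuclideanSpace ℝ (Fin s), ‖z‖ < 2 * εx → z ∈ Om := by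
    intro z hz
    apply hrOm
    rw [Metric.mem_ball, dist_zero_right]
    have : 2 * εx ≤ rOm := by
      rw [hεx_def]
      have := min_le_right r rOm
      linarith
    linarith
  have hballU : ∀ w : EuclideanSpace ℝ (Fin d), ‖w‖ < 2 * εu → w ∈ U := by
    intro w hw
    apply hrU
    rw [Metric.mem_ball, dist_zero_right]
    have : 2 * εu ≤ rU := by
      rw [hεu_def]
      have := min_le_right r rU
      linarith
    linarith
  have hεxr : 2 * εx < r := by
    rw [hεx_def]
    have := min_le_left r rOm
    linarith
  have hεur : 2 * εu < r := by
    rw [hεu_def]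
    have := min_le_left r rU
    linarith
  obtain ⟨δx, hδx0, hδx⟩ := hcinf (Metric.ball 0 εx) (Metric.ball_mem_nhds 0 hεx0)
  have hδu : ∃ δu > 0, ∀ z ∈ Om, ∀ w ∈ U, c z w < δu → ‖w‖ < εu := by
    set K := (Om ×ˢ U) ∩ {p : EuclideanSpace ℝ (Fin s) × EuclideanSpace ℝ (Fin d) | εu ≤ ‖p.2‖}
      with hK_def
    have hKc : IsCompact K := (hOm.prod hU).inter_right
      (isClosed_le continuous_const (continuous_norm.comp continuous_snd))
    rcases K.eq_empty_or_nonempty with hKe | hKne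
    · refine ⟨1, one_pos, fun z hz w hw _ => ?_⟩
      by_contra hge
      have hmem : (z, w) ∈ K := ⟨Set.mk_mem_prod hz hw, le_of_not_gt hge⟩
      rw [hKe] at hmem
      exact hmem
    · obtain ⟨p0, hp0K, hp0min⟩ := hKc.exists_isMinOn hKne
        ((hc.continuousOn.mono (fun p hp => hp.1)) :
          ContinuousOn (fun p : EuclideanSpace ℝ (Fin s) × EuclideanSpace ℝ (Fin d) => c p.1 p.2) K)
      have hp0U : p0.2 ∈ U := hp0K.1.2
      have hp0Om : p0.1 ∈ Om := hp0K.1.1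
      have hp0ne : p0.2 ≠ 0 := by
        intro h
        have := hp0K.2
        rw [Set.mem_setOf_eq, h, norm_zero] at this
        linarith
      refine ⟨c p0.1 p0.2, hcpos p0.1 hp0Om p0.2 hp0U hp0ne, fun z hz w hw hlt => ?_⟩
      by_contra hge
      have hmem : (z, w) ∈ K := ⟨Set.mk_mem_prod hz hw, le_of_not_gt hge⟩
      have := hp0min hmem
      simp only [Set.mem_setOf_eq] at this
      exact absurd hlt (not_lt.mpr this)
  obtain ⟨δu, hδu0, hδuP⟩ := hδu
  set θ : ℝ := min δx δu / 2 with hθ_def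
  have hθ0 : 0 < θ := by rw [hθ_def]; exact div_pos (lt_min hδx0 hδu0) (by norm_num)
  have hθδx : θ < δx := by
    rw [hθ_def]; have := min_le_left δx δu; linarith [lt_min hδx0 hδu0]
  have hθδu : θ < δu := by
    rw [hθ_def]; have := min_le_right δx δu; linarith [lt_min hδx0 hδu0]
  set ε0 : ℝ := min εx (min εx εu / (2 * C * (1 + ‖Fb‖))) with hε0_def
  have hε00 : 0 < ε0 := by
    rw [hε0_def]
    apply lt_min hεx0
    apply div_pos (lt_min hεx0 hεu0)
    positivity
  have hε0εx : ε0 ≤ εx := by rw [hε0_def]; exact min_le_left _ _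
  have hε0C : 2 * C * (1 + ‖Fb‖) * ε0 ≤ min εx εu := by
    have h1 : ε0 ≤ min εx εu / (2 * C * (1 + ‖Fb‖)) := by rw [hε0_def]; exact min_le_right _ _
    have h2 : (0:ℝ) < 2 * C * (1 + ‖Fb‖) := by positivity
    calc 2 * C * (1 + ‖Fb‖) * ε0 ≤ 2 * C * (1 + ‖Fb‖) * (min εx εu / (2 * C * (1 + ‖Fb‖))) :=
          mul_le_mul_of_nonneg_left h1 h2.le
      _ = min εx εu := by field_simp
  set Kc : ℝ := max Lc 0 + max Lu 0 * ‖Fb‖ with hKc_def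
  have hKc0 : 0 ≤ Kc := by
    rw [hKc_def]
    have := le_max_right Lc 0
    have := le_max_right Lu 0
    positivity
  set Lkey : ℝ := Kc * C / (1 - σh) with hLkey_def
  have hLkey0 : 0 ≤ Lkey := by
    rw [hLkey_def]
    apply div_nonneg (mul_nonneg hKc0 hC0.le)
    linarith
  have key : ∀ y uu, ‖y‖ < ε0 → (∀ k, uu k ∈ U) →
      (∑' k : ℕ, ENNReal.ofReal (c (traj f y uu k) (uu k))) ≤ ENNReal.ofReal θ →
      ∀ x, ‖x‖ < ε0 →
        valueFn U f c x ≤ (∑' k : ℕ, ENNReal.ofReal (c (traj f y uu k) (uu k)))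
          + ENNReal.ofReal (Lkey * ‖x - y‖) := by
    intro y uu hy huu hS x hx
    set Y : ℕ → EuclideanSpace ℝ (Fin s) := traj f y uu with hY_def
    have hYsucc : ∀ k, Y (k + 1) = f (Y k) (uu k) := fun k => rfl
    have hyOm : y ∈ Om := hballOm y (by linarith only [hy, hε0εx, hεx0])
    have hYOm : ∀ k, Y k ∈ Om := by
      intro k
      induction k with
      | zero => exact hyOm
      | succ k ih => rw [hYsucc]; exact hfm _ ih _ (huu k)
    have hstage : ∀ k, c (Y k) (uu k) ≤ θ := by
      intro k
      have h1 : ENNReal.ofReal (c (Y k) (uu k)) ≤ ENNReal.ofReal θ :=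
        le_trans (ENNReal.le_tsum k) hS
      exact (ENNReal.ofReal_le_ofReal_iff hθ0.le).mp h1
    have hYx : ∀ k, ‖Y k‖ < εx := by
      intro k
      by_contra hge
      have hmem : Y k ∈ Om \ Metric.ball 0 εx :=
        ⟨hYOm k, fun hmem => hge (by rwa [Metric.mem_ball, dist_zero_right] at hmem)⟩
      have h1 := hδx (Y k) hmem (uu k) (huu k)
      linarith only [h1, hstage k, hθδx]
    have hux : ∀ k, ‖uu k‖ < εu := fun k =>
      hδuP (Y k) (hYOm k) (uu k) (huu k) (lt_of_le_of_lt (hstage k) hθδu)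
    set X : ℕ → EuclideanSpace ℝ (Fin s) := fun k =>
      Nat.rec (motive := fun _ => EuclideanSpace ℝ (Fin s)) x
        (fun k xk => f xk (uu k + Fb (xk - Y k))) k with hX_def
    set v : ℕ → EuclideanSpace ℝ (Fin d) := fun k => uu k + Fb (X k - Y k) with hv_def
    have hX0 : X 0 = x := rfl
    have hXsucc : ∀ k, X (k + 1) = f (X k) (v k) := fun k => rfl
    set e : ℕ → EuclideanSpace ℝ (Fin s) := fun k => X k - Y k with he_def
    have he0 : ‖e 0‖ = ‖x - y‖ := rfl
    have hρ0 : (0:ℝ) ≤ ‖x - y‖ := norm_nonneg _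
    have hρ2 : ‖x - y‖ < 2 * ε0 :=
      lt_of_le_of_lt (norm_sub_le x y) (by linarith only [hx, hy])
    have hCbase : C * ‖x - y‖ ≤ C * (2 * ε0) := mul_le_mul_of_nonneg_left hρ2.le hC0.le
    have hCρx : C * ‖x - y‖ ≤ εx := by
      have h1 : 2 * C * (1 + ‖Fb‖) * ε0 ≤ εx := le_trans hε0C (min_le_left _ _)
      have h3 : C * (2 * ε0) ≤ 2 * C * (1 + ‖Fb‖) * ε0 := by
        nlinarith only [mul_nonneg (mul_nonneg hC0.le hε00.le) (norm_nonneg Fb)]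
      linarith only [h1, h3, hCbase]
    have hCρu : C * ‖x - y‖ ≤ εu := by
      have h1 : 2 * C * (1 + ‖Fb‖) * ε0 ≤ εu := le_trans hε0C (min_le_right _ _)
      have h3 : C * (2 * ε0) ≤ 2 * C * (1 + ‖Fb‖) * ε0 := by
        nlinarith only [mul_nonneg (mul_nonneg hC0.le hε00.le) (norm_nonneg Fb)]
      linarith only [h1, h3, hCbase]
    have hFbρ : ‖Fb‖ * (C * ‖x - y‖) ≤ εu := by
      have h1 : 2 * C * (1 + ‖Fb‖) * ε0 ≤ εu := le_trans hε0C (min_le_right _ _)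
      have h3 : ‖Fb‖ * (C * ‖x - y‖) ≤ ‖Fb‖ * (C * (2 * ε0)) :=
        mul_le_mul_of_nonneg_left hCbase (norm_nonneg _)
      have h4 : ‖Fb‖ * (C * (2 * ε0)) ≤ 2 * C * (1 + ‖Fb‖) * ε0 := by
        nlinarith only [mul_nonneg hC0.le hε00.le]
      linarith only [h1, h3, h4]
    have hTek : ∀ k, T (e k) = DF (e k, Fb (e k)) := by
      intro k
      rw [hT_def, ContinuousLinearMap.comp_apply, ContinuousLinearMap.prod_apply,
        ContinuousLinearMap.id_apply]
    have hsub : ∀ k, (X k, v k) - (Y k, uu k) = (e k, Fb (e k)) := by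
      intro k
      rw [Prod.mk_sub_mk]
      have h1 : v k - uu k = Fb (e k) := by
        rw [hv_def]
        exact add_sub_cancel_left _ _
      rw [h1]
    have hrec : ∀ k, (∀ j ≤ k, ‖e j‖ ≤ C * ((1 + σ) / 2) ^ j * ‖e 0‖) →
        ‖e (k + 1) - T (e k)‖ ≤ ηf * ‖e k‖ := by
      intro k hk
      have hσhk : ((1 + σ) / 2) ^ k ≤ 1 :=
        pow_le_one₀ (by linarith only [hσ0]) (by linarith only [hσ1])
      have hek : ‖e k‖ ≤ C * ‖x - y‖ := by
        have h1 := hk k le_rfl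
        rw [he0, mul_assoc] at h1
        have h2 : ((1 + σ) / 2) ^ k * ‖x - y‖ ≤ ‖x - y‖ :=
          mul_le_of_le_one_left hρ0 hσhk
        have h3 := mul_le_mul_of_nonneg_left h2 hC0.le
        linarith only [h1, h3]
      have hXb : ‖X k‖ < 2 * εx := by
        have h1 : ‖X k‖ - ‖Y k‖ ≤ ‖X k - Y k‖ := norm_sub_norm_le _ _
        have h2 : ‖X k - Y k‖ = ‖e k‖ := rfl
        rw [h2] at h1
        linarith only [h1, hek, hCρx, hYx k]
      have hvb : ‖v k‖ < 2 * εu := by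
        have h1 : ‖v k‖ ≤ ‖uu k‖ + ‖Fb (e k)‖ := norm_add_le _ _
        have h2 : ‖Fb (e k)‖ ≤ ‖Fb‖ * ‖e k‖ := Fb.le_opNorm _
        have h3 : ‖Fb‖ * ‖e k‖ ≤ ‖Fb‖ * (C * ‖x - y‖) :=
          mul_le_mul_of_nonneg_left hek (norm_nonneg _)
        linarith only [h1, h2, h3, hux k, hFbρ]
      have hp : ‖((X k, v k) : EuclideanSpace ℝ (Fin s) × EuclideanSpace ℝ (Fin d))‖ < r := by
        rw [Prod.norm_def]
        exact sup_lt_iff.mpr ⟨lt_trans hXb hεxr, lt_trans hvb hεur⟩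
      have hq : ‖((Y k, uu k) : EuclideanSpace ℝ (Fin s) × EuclideanSpace ℝ (Fin d))‖ < r := by
        rw [Prod.norm_def]
        refine sup_lt_iff.mpr ⟨?_, ?_⟩
        · exact lt_trans (hYx k) (by linarith only [hεx0, hεxr])
        · exact lt_trans (hux k) (by linarith only [hεu0, hεur])
      have hEk1 : e (k + 1) = F (X k, v k) - F (Y k, uu k) := rfl
      calc ‖e (k + 1) - T (e k)‖
          = ‖F (X k, v k) - F (Y k, uu k)
              - DF ((X k, v k) - (Y k, uu k))‖ := by rw [hEk1, hTek k, ← hsub k]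
        _ ≤ η0 * ‖(X k, v k) - (Y k, uu k)‖ := hsd _ _ hp hq
        _ ≤ ηf * ‖e k‖ := by
            rw [hsub k, Prod.norm_def]
            have hm : ‖e k‖ ⊔ ‖Fb (e k)‖ ≤ (1 + ‖Fb‖) * ‖e k‖ := by
              refine sup_le ?_ (le_trans (Fb.le_opNorm _) ?_)
              · nlinarith only [mul_nonneg (norm_nonneg Fb) (norm_nonneg (e k))]
              · nlinarith only [norm_nonneg (e k)]
            calc η0 * (‖e k‖ ⊔ ‖Fb (e k)‖) ≤ η0 * ((1 + ‖Fb‖) * ‖e k‖) :=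
                  mul_le_mul_of_nonneg_left hm hη00.le
              _ = ηf * ‖e k‖ := by rw [hη0_def]; field_simp
    have hηs' : C * ηf ≤ ((1 + σ) / 2 - σ) ^ 2 / ((1 + σ) / 2) := by
      rw [← hσh_def]; exact hηs
    have hdecay0 := perturbed_decay T C σ ηf hC hσ0 hσ1 hηf0.le hηs' hTpow e hrec
    have hdecay : ∀ k, ‖e k‖ ≤ C * σh ^ k * ‖x - y‖ := by
      intro k
      have h1 := hdecay0 k
      rw [he0] at h1
      rw [hσh_def]
      exact h1
    have hσhk1 : ∀ k : ℕ, σh ^ k ≤ 1 := fun k => pow_le_one₀ hσh0.le hσh1.le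
    have hek2 : ∀ k, ‖e k‖ ≤ C * ‖x - y‖ := by
      intro k
      have h1 := hdecay k
      rw [mul_assoc] at h1
      have h2 : σh ^ k * ‖x - y‖ ≤ ‖x - y‖ := mul_le_of_le_one_left hρ0 (hσhk1 k)
      have h3 := mul_le_mul_of_nonneg_left h2 hC0.le
      linarith only [h1, h3]
    have hXb2 : ∀ k, ‖X k‖ < 2 * εx := by
      intro k
      have h1 : ‖X k‖ - ‖Y k‖ ≤ ‖X k - Y k‖ := norm_sub_norm_le _ _
      have h2 : ‖X k - Y k‖ = ‖e k‖ := rfl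
      rw [h2] at h1
      linarith only [h1, hYx k, hek2 k, hCρx]
    have hvb2 : ∀ k, ‖v k‖ < 2 * εu := by
      intro k
      have h1 : ‖v k‖ ≤ ‖uu k‖ + ‖Fb (e k)‖ := norm_add_le _ _
      have h2 : ‖Fb (e k)‖ ≤ ‖Fb‖ * ‖e k‖ := Fb.le_opNorm _
      have h3 : ‖Fb‖ * ‖e k‖ ≤ ‖Fb‖ * (C * ‖x - y‖) :=
        mul_le_mul_of_nonneg_left (hek2 k) (norm_nonneg _)
      linarith only [h1, h2, h3, hux k, hFbρ]
    have hXOm : ∀ k, X k ∈ Om := fun k => hballOm _ (hXb2 k)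
    have hvU : ∀ k, v k ∈ U := fun k => hballU _ (hvb2 k)
    have hKCρ0 : (0:ℝ) ≤ Kc * C * ‖x - y‖ :=
      mul_nonneg (mul_nonneg hKc0 hC0.le) hρ0
    have hcost : ∀ k, c (X k) (v k) ≤ c (Y k) (uu k) + Kc * C * ‖x - y‖ * σh ^ k := by
      intro k
      have h1 := hclip (X k) (hXOm k) (Y k) (hYOm k) (v k) (hvU k)
      have h2 := hculip (Y k) (hYOm k) (v k) (hvU k) (uu k) (huu k)
      have h1' : c (X k) (v k) - c (Y k) (v k) ≤ Lc * ‖X k - Y k‖ :=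
        le_trans (le_abs_self _) h1
      have h2' : c (Y k) (v k) - c (Y k) (uu k) ≤ Lu * ‖v k - uu k‖ :=
        le_trans (le_abs_self _) h2
      have h3 : ‖X k - Y k‖ = ‖e k‖ := rfl
      have h4 : ‖v k - uu k‖ = ‖Fb (e k)‖ := by
        have h4' : v k - uu k = Fb (e k) := by rw [hv_def]; exact add_sub_cancel_left _ _
        rw [h4']
      have h5 : Lc * ‖e k‖ ≤ max Lc 0 * ‖e k‖ :=
        mul_le_mul_of_nonneg_right (le_max_left _ _) (norm_nonneg _)
      have h6 : Lu * ‖Fb (e k)‖ ≤ max Lu 0 * (‖Fb‖ * ‖e k‖) :=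
        le_trans (mul_le_mul_of_nonneg_right (le_max_left _ _) (norm_nonneg _))
          (mul_le_mul_of_nonneg_left (Fb.le_opNorm _) (le_max_right _ _))
      have h7 : max Lc 0 * ‖e k‖ + max Lu 0 * (‖Fb‖ * ‖e k‖) = Kc * ‖e k‖ := by
        rw [hKc_def]; ring
      have h8 : Kc * ‖e k‖ ≤ Kc * (C * σh ^ k * ‖x - y‖) :=
        mul_le_mul_of_nonneg_left (hdecay k) hKc0
      have h9 : Kc * (C * σh ^ k * ‖x - y‖) = Kc * C * ‖x - y‖ * σh ^ k := by ring
      rw [h3] at h1'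
      rw [h4] at h2'
      linarith only [h1', h2', h5, h6, h7, h8, h9]
    have htraj : ∀ k, traj f x v k = X k := by
      intro k
      induction k with
      | zero => rfl
      | succ k ih =>
        show f (traj f x v k) (v k) = X (k + 1)
        rw [ih, hXsucc]
    have hVle : valueFn U f c x ≤ ∑' k : ℕ, ENNReal.ofReal (c (X k) (v k)) := by
      have h1 : valueFn U f c x ≤ ∑' k : ℕ, ENNReal.ofReal (c (traj f x v k) (v k)) := by
        simp only [valueFn]
        exact iInf₂_le v hvU
      have h2 : ∀ k : ℕ, ENNReal.ofReal (c (traj f x v k) (v k))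
          = ENNReal.ofReal (c (X k) (v k)) := fun k => by rw [htraj k]
      rwa [tsum_congr h2] at h1
    refine le_trans hVle ?_
    have hgeom : ∑' k : ℕ, ENNReal.ofReal (Kc * C * ‖x - y‖ * σh ^ k)
        ≤ ENNReal.ofReal (Lkey * ‖x - y‖) := by
      have h1 : ∀ k : ℕ, ENNReal.ofReal (Kc * C * ‖x - y‖ * σh ^ k)
          = ENNReal.ofReal (Kc * C * ‖x - y‖) * ENNReal.ofReal σh ^ k := fun k => by
        rw [ENNReal.ofReal_mul hKCρ0, ENNReal.ofReal_pow hσh0.le]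
      rw [tsum_congr h1, ENNReal.tsum_mul_left, ENNReal.tsum_geometric]
      have h2 : (1 - ENNReal.ofReal σh)⁻¹ = ENNReal.ofReal ((1 - σh)⁻¹) := by
        rw [ENNReal.ofReal_inv_of_pos (by linarith only [hσh1] : (0:ℝ) < 1 - σh),
          ENNReal.ofReal_sub _ hσh0.le, ENNReal.ofReal_one]
      rw [h2, ← ENNReal.ofReal_mul hKCρ0]
      apply ENNReal.ofReal_le_ofReal
      have h3 : Kc * C * ‖x - y‖ * (1 - σh)⁻¹ = Lkey * ‖x - y‖ := by
        rw [hLkey_def]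
        field_simp
      rw [h3]
    calc ∑' k : ℕ, ENNReal.ofReal (c (X k) (v k))
        ≤ ∑' k : ℕ, (ENNReal.ofReal (c (Y k) (uu k))
            + ENNReal.ofReal (Kc * C * ‖x - y‖ * σh ^ k)) := by
          apply ENNReal.tsum_le_tsum
          intro k
          calc ENNReal.ofReal (c (X k) (v k))
              ≤ ENNReal.ofReal (c (Y k) (uu k) + Kc * C * ‖x - y‖ * σh ^ k) :=
                ENNReal.ofReal_le_ofReal (hcost k)
            _ = _ := ENNReal.ofReal_add (hc0 _ (hYOm k) _ (huu k))
                (mul_nonneg hKCρ0 (pow_nonneg hσh0.le k))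
      _ = (∑' k : ℕ, ENNReal.ofReal (c (Y k) (uu k)))
            + ∑' k : ℕ, ENNReal.ofReal (Kc * C * ‖x - y‖ * σh ^ k) := ENNReal.tsum_add
      _ ≤ (∑' k : ℕ, ENNReal.ofReal (c (Y k) (uu k))) + ENNReal.ofReal (Lkey * ‖x - y‖) :=
          add_le_add_right hgeom _
  have hV0 : ∀ z : EuclideanSpace ℝ (Fin s), ‖z‖ < ε0 →
      valueFn U f c z ≤ ENNReal.ofReal (Lkey * ‖z‖) := by
    intro z hz
    have htraj0 : ∀ k, traj f 0 (fun _ => (0 : EuclideanSpace ℝ (Fin d))) k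
        = (0 : EuclideanSpace ℝ (Fin s)) := by
      intro k
      induction k with
      | zero => rfl
      | succ k ih =>
        show f (traj f 0 _ k) 0 = 0
        rw [ih, hf00]
    have hS0 : (∑' k : ℕ, ENNReal.ofReal
        (c (traj f 0 (fun _ => (0 : EuclideanSpace ℝ (Fin d))) k)
          ((fun _ => (0 : EuclideanSpace ℝ (Fin d))) k))) = 0 := by
      have h1 : ∀ k : ℕ, ENNReal.ofReal
          (c (traj f 0 (fun _ => (0 : EuclideanSpace ℝ (Fin d))) k)
            ((fun _ => (0 : EuclideanSpace ℝ (Fin d))) k)) = 0 := by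
        intro k
        rw [show ((fun _ => (0 : EuclideanSpace ℝ (Fin d))) k) = 0 from rfl, htraj0 k, hc00,
          ENNReal.ofReal_zero]
      rw [tsum_congr h1, tsum_zero]
    have h := key 0 (fun _ => 0) (by simpa using hε00) (fun _ => h0U)
      (by rw [hS0]; exact zero_le) z hz
    rw [hS0, zero_add, sub_zero] at h
    exact h
  set ε1 : ℝ := min (ε0 / 2) (θ / (4 * (Lkey + 1))) with hε1_def
  have hL1 : (0:ℝ) < Lkey + 1 := by linarith only [hLkey0]
  have hε10 : 0 < ε1 := by
    rw [hε1_def]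
    apply lt_min (by linarith only [hε00])
    exact div_pos hθ0 (by linarith only [hLkey0])
  have h2ε1 : ∀ z : EuclideanSpace ℝ (Fin s), ‖z‖ < 2 * ε1 → ‖z‖ < ε0 := by
    intro z hz
    have h1 : ε1 ≤ ε0 / 2 := by rw [hε1_def]; exact min_le_left _ _
    linarith only [h1, hz]
  have hVfin : ∀ z : EuclideanSpace ℝ (Fin s), ‖z‖ < ε0 → valueFn U f c z ≠ ⊤ := fun z hz =>
    ne_top_of_le_ne_top ENNReal.ofReal_ne_top (hV0 z hz)
  have hVθ : ∀ z : EuclideanSpace ℝ (Fin s), ‖z‖ < 2 * ε1 →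
      valueFn U f c z ≤ ENNReal.ofReal (θ / 2) := by
    intro z hz
    refine le_trans (hV0 z (h2ε1 z hz)) (ENNReal.ofReal_le_ofReal ?_)
    have h1 : ε1 ≤ θ / (4 * (Lkey + 1)) := by rw [hε1_def]; exact min_le_right _ _
    have h4 : ‖z‖ ≤ 2 * (θ / (4 * (Lkey + 1))) := by linarith only [hz, h1]
    calc Lkey * ‖z‖ ≤ (Lkey + 1) * ‖z‖ := by linarith only [norm_nonneg z]
      _ ≤ (Lkey + 1) * (2 * (θ / (4 * (Lkey + 1)))) :=
          mul_le_mul_of_nonneg_left h4 hL1.le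
      _ = θ / 2 := by field_simp; ring
  have main : ∀ x y : EuclideanSpace ℝ (Fin s), ‖x‖ < 2 * ε1 → ‖y‖ < 2 * ε1 →
      (valueFn U f c x).toReal ≤ (valueFn U f c y).toReal + Lkey * ‖x - y‖ := by
    intro x y hx hy
    have hfy := hVfin y (h2ε1 y hy)
    refine le_of_forall_pos_le_add ?_
    intro ηp hηp
    set η2 : ℝ := min ηp (θ / 2) with hη2_def
    have hη20 : 0 < η2 := lt_min hηp (by linarith only [hθ0])
    have hlt : valueFn U f c y < valueFn U f c y + ENNReal.ofReal η2 :=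
      ENNReal.lt_add_right hfy (by
        intro hcon
        have h0 := ENNReal.ofReal_eq_zero.mp hcon
        linarith only [h0, hη20])
    obtain ⟨uu, huu, hSu⟩ : ∃ uu, (∀ k, uu k ∈ U) ∧
        (∑' k : ℕ, ENNReal.ofReal (c (traj f y uu k) (uu k)))
          < valueFn U f c y + ENNReal.ofReal η2 := by
      have h3 : (⨅ (u : ℕ → EuclideanSpace ℝ (Fin d)) (_ : ∀ k, u k ∈ U),
          ∑' k : ℕ, ENNReal.ofReal (c (traj f y u k) (u k)))
            < valueFn U f c y + ENNReal.ofReal η2 := hlt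
      rw [iInf_lt_iff] at h3
      obtain ⟨uu, h3⟩ := h3
      rw [iInf_lt_iff] at h3
      obtain ⟨huu, h3⟩ := h3
      exact ⟨uu, huu, h3⟩
    have hSθ : (∑' k : ℕ, ENNReal.ofReal (c (traj f y uu k) (uu k))) ≤ ENNReal.ofReal θ := by
      refine le_trans hSu.le ?_
      calc valueFn U f c y + ENNReal.ofReal η2
          ≤ ENNReal.ofReal (θ / 2) + ENNReal.ofReal (θ / 2) :=
            add_le_add (hVθ y hy) (ENNReal.ofReal_le_ofReal (min_le_right _ _))
        _ = ENNReal.ofReal θ := by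
            rw [← ENNReal.ofReal_add (by linarith only [hθ0]) (by linarith only [hθ0])]
            norm_num
    have hk := key y uu (h2ε1 y hy) huu hSθ x (h2ε1 x hx)
    have hnn : (0:ℝ) ≤ Lkey * ‖x - y‖ := mul_nonneg hLkey0 (norm_nonneg _)
    have hk2 : valueFn U f c x
        ≤ valueFn U f c y + ENNReal.ofReal (η2 + Lkey * ‖x - y‖) := by
      calc valueFn U f c x
          ≤ (∑' k : ℕ, ENNReal.ofReal (c (traj f y uu k) (uu k)))
            + ENNReal.ofReal (Lkey * ‖x - y‖) := hk
        _ ≤ (valueFn U f c y + ENNReal.ofReal η2) + ENNReal.ofReal (Lkey * ‖x - y‖) :=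
            add_le_add_left hSu.le _
        _ = valueFn U f c y + ENNReal.ofReal (η2 + Lkey * ‖x - y‖) := by
            rw [add_assoc, ← ENNReal.ofReal_add hη20.le hnn]
    have hfin : valueFn U f c y + ENNReal.ofReal (η2 + Lkey * ‖x - y‖) ≠ ⊤ :=
      ENNReal.add_ne_top.mpr ⟨hfy, ENNReal.ofReal_ne_top⟩
    have hk3 := ENNReal.toReal_mono hfin hk2
    rw [ENNReal.toReal_add hfy ENNReal.ofReal_ne_top,
      ENNReal.toReal_ofReal (by linarith only [hη20, hnn])] at hk3
    have hη2p : η2 ≤ ηp := min_le_left _ _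
    linarith only [hk3, hη2p]
  refine ⟨ε1, hε10, Lkey + 1, hL1, fun x y hx hy => ?_⟩
  rw [abs_sub_le_iff]
  constructor
  · have h1 := main x y hx hy
    linarith only [h1, norm_nonneg (x - y)]
  · have h1 := main y x hy hx
    rw [norm_sub_rev] at h1
    linarith only [h1, norm_nonneg (x - y)]
end
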